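/- arXiv:1806.05107 — 2 statements merged into one kernel-verified Lean document; each statement's English description precedes it below -/
import Mathlib

section
/- Let Δ be a simplicial complex of dimension d-1 on n vertices that is CM_t for some t ≥ 0. Then Δ satisfies Serre's condition S_{2d-n-t+2}, i.e., the reduced simplicial homology H̃_i(link_Δ F; K) vanishes for all faces F ∈ Δ and all i < min{2d-n-t+1, dim(link_Δ F)}. -/
open Finset

/-! # Abstract simplicial complexes on vertex set `Fin n` -/

/-- A (nonempty) abstract simplicial complex on vertex set `Fin n`:
a collection of finite subsets containing `∅` and closed under taking subsets. -/
def IsComplex {n : ℕ} (Δ : Set (Finset (Fin n))) : Prop :=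
  ∅ ∈ Δ ∧ ∀ F ∈ Δ, ∀ G ⊆ F, G ∈ Δ

/-- The link of a face `F`. -/
def link {n : ℕ} (Δ : Set (Finset (Fin n))) (F : Finset (Fin n)) : Set (Finset (Fin n)) :=
  {G | Disjoint F G ∧ F ∪ G ∈ Δ}

/-- The dimension of a simplicial complex, as an integer (`-1` for the void/empty complex). -/
noncomputable def dimC {n : ℕ} (Δ : Set (Finset (Fin n))) : ℤ :=
  sSup ((fun F : Finset (Fin n) => (F.card : ℤ) - 1) '' Δ)

/-- `Δ` is pure with all facets of cardinality `d` (i.e. pure of dimension `d-1`):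
there is a face of cardinality `d` and every face is contained in one. -/
def IsPure {n : ℕ} (Δ : Set (Finset (Fin n))) (d : ℕ) : Prop :=
  (∃ F ∈ Δ, F.card = d) ∧ ∀ F ∈ Δ, ∃ G ∈ Δ, F ⊆ G ∧ G.card = d

/-- The Alexander dual `Δ^∨ = {F : [n] \ F ∉ Δ}`. -/
def dualC {n : ℕ} (Δ : Set (Finset (Fin n))) : Set (Finset (Fin n)) :=
  {F | Fᶜ ∉ Δ}

/-! ## Simplicial (reduced, augmented) chain complex and reduced homology -/

variable (K : Type) [Field K]

/-- The space of `k`-chains: formal `K`-linear combinations of faces of cardinality `k`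
(`k = 0` gives the span of the empty face, playing the role of the augmentation). -/
abbrev Chains {n : ℕ} (Δ : Set (Finset (Fin n))) (k : ℕ) : Type :=
  {F : Finset (Fin n) // F ∈ Δ ∧ F.card = k} →₀ K

/-- The boundary of a single face of cardinality `k+1`. -/
noncomputable def boundaryElt {n : ℕ} (Δ : Set (Finset (Fin n))) (k : ℕ)
    (F : {F : Finset (Fin n) // F ∈ Δ ∧ F.card = k + 1}) : Chains K Δ k :=
  ∑ v ∈ F.1.attach, open Classical in if h : F.1.erase v.1 ∈ Δ then
      ((-1 : K) ^ (F.1.filter (fun w => w < v.1)).card) •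
        Finsupp.single ⟨F.1.erase v.1,
          ⟨h, by simp [Finset.card_erase_of_mem v.2, F.2.2]⟩⟩ 1
    else 0

/-- The simplicial boundary map from `(k+1)`-chains to `k`-chains
(for `k = 0` this is the augmentation map). -/
noncomputable def boundaryMap {n : ℕ} (Δ : Set (Finset (Fin n))) (k : ℕ) :
    Chains K Δ (k + 1) →ₗ[K] Chains K Δ k :=
  Finsupp.lsum K fun F => LinearMap.toSpanSingleton K _ (boundaryElt K Δ k F)

/-- Vanishing of the `i`-th reduced simplicial homology of `Δ` with coefficients in `K`
(`i : ℤ`; for `i ≤ -2` the homology is trivially zero, `i = -1` concerns the augmentation). -/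
noncomputable def ReducedHomologyZero {n : ℕ} (Δ : Set (Finset (Fin n))) (i : ℤ) : Prop :=
  if i ≤ -2 then True
  else if i = -1 then Function.Surjective (boundaryMap K Δ 0)
  else LinearMap.ker (boundaryMap K Δ i.toNat) ≤ LinearMap.range (boundaryMap K Δ (i.toNat + 1))

/-! ## Cohen–Macaulay complexes (Reisner's criterion) and relatives -/

/-- `Δ` is Cohen–Macaulay over `K` (by Reisner's criterion). -/
noncomputable def IsCMComplex {n : ℕ} (Δ : Set (Finset (Fin n))) : Prop :=
  IsComplex Δ ∧ ∀ F ∈ Δ, ∀ i : ℤ, i < dimC (link Δ F) → ReducedHomologyZero K (link Δ F) i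

/-- `Δ` is `CMₜ` over `K` with facets of cardinality `d`: it is pure and the link of every
face of cardinality at least `t` is Cohen–Macaulay. -/
noncomputable def IsCMt {n : ℕ} (Δ : Set (Finset (Fin n))) (d t : ℕ) : Prop :=
  IsComplex Δ ∧ IsPure Δ d ∧ ∀ F ∈ Δ, t ≤ F.card → IsCMComplex K (link Δ F)

/-- `Δ` is Buchsbaum over `K` with facets of cardinality `d`: pure, and
`H̃ᵢ(link F; K) = 0` for every nonempty face `F` and `i < dim link F`. -/
noncomputable def IsBuchsbaum {n : ℕ} (Δ : Set (Finset (Fin n))) (d : ℕ) : Prop :=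
  IsComplex Δ ∧ IsPure Δ d ∧ ∀ F ∈ Δ, F ≠ ∅ →
    ∀ i : ℤ, i < dimC (link Δ F) → ReducedHomologyZero K (link Δ F) i

/-- Serre's condition `S_r`: `H̃ᵢ(link F; K) = 0` for all faces `F` and all
`i < min (r-1) (dim link F)`. -/
noncomputable def SerreS {n : ℕ} (Δ : Set (Finset (Fin n))) (r : ℤ) : Prop :=
  ∀ F ∈ Δ, ∀ i : ℤ, i < min (r - 1) (dimC (link Δ F)) → ReducedHomologyZero K (link Δ F) i
/-! ## Polynomial rings, Stanley–Reisner ideals, graded Betti numbers, depth -/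

/-- The polynomial ring `K[x_1,…,x_n]`. -/
abbrev PolyR (K : Type) [Field K] (n : ℕ) := MvPolynomial (Fin n) K

/-- The Stanley–Reisner ideal `I_Δ`, generated by the monomials supported on non-faces. -/
noncomputable def srIdeal {n : ℕ} (Δ : Set (Finset (Fin n))) : Ideal (PolyR K n) :=
  Ideal.span ((fun F : Finset (Fin n) => ∏ i ∈ F, MvPolynomial.X i) '' {F | F ∉ Δ})

section Koszul

variable (n : ℕ) (M : Type) [AddCommGroup M] [Module (PolyR K n) M]
  [Module K M] [IsScalarTower K (PolyR K n) M]

/-- The `i`-th term `M ⊗ Λⁱ(Kⁿ)` of the Koszul complex of `x_1,…,x_n` with values in `M`,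
realized as finitely supported families indexed by `i`-subsets of `[n]`. -/
abbrev KChains (i : ℕ) : Type := {S : Finset (Fin n) // S.card = i} →₀ M

/-- Multiplication by the variable `x_v`, as a `K`-linear endomorphism of `M`. -/
noncomputable def smulX (v : Fin n) : M →ₗ[K] M where
  toFun m := (MvPolynomial.X v : PolyR K n) • m
  map_add' a b := smul_add _ a b
  map_smul' c m := smul_comm (MvPolynomial.X v : PolyR K n) c m

/-- Koszul differential on a basis element. -/
noncomputable def kdElt (i : ℕ) (S : {S : Finset (Fin n) // S.card = i + 1}) :
    M →ₗ[K] KChains n M i :=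
  ∑ v ∈ S.1.attach, ((-1 : K) ^ ((S.1.filter (fun w => w < v.1)).card)) •
    ((Finsupp.lsingle (M := M) ⟨S.1.erase v.1, by
        simp [Finset.card_erase_of_mem v.2, S.2]⟩).comp (smulX K n M v.1))

/-- The Koszul differential `M ⊗ Λ^{i+1} → M ⊗ Λ^i` for the sequence `x_1,…,x_n`. -/
noncomputable def kd (i : ℕ) : KChains n M (i + 1) →ₗ[K] KChains n M i :=
  Finsupp.lsum K fun S => kdElt K n M i S

/-- The Koszul differential leaving homological degree `i` (the zero map for `i = 0`). -/
noncomputable def kdOut : ∀ i : ℕ, KChains n M i →ₗ[K] KChains n M (i - 1)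
  | 0 => 0
  | (i + 1) => kd K n M i

/-- The internal-degree-`j` part of the `i`-th Koszul chain module, with respect to a
grading `g` of `M` by `K`-subspaces (`e_S ⊗ m` has degree `|S| + deg m`). -/
def KCdeg (g : ℤ → Submodule K M) (i : ℕ) (j : ℤ) : Submodule K (KChains n M i) where
  carrier := {f | ∀ S, f S ∈ g (j - i)}
  add_mem' := fun hf hg S => by
    rw [Finsupp.add_apply]; exact add_mem (hf S) (hg S)
  zero_mem' := fun S => by rw [Finsupp.zero_apply]; exact zero_mem _
  smul_mem' := fun c f hf S => by
    rw [Finsupp.smul_apply]; exact Submodule.smul_mem _ c (hf S)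

/-- Vanishing of the graded Betti number `β_{i,j}(M) = dim_K Tor_i(M,K)_j`, expressed via
the Koszul complex of `x_1,…,x_n`: every internal-degree-`j` cycle in homological degree `i`
is a boundary. -/
noncomputable def BettiZero (g : ℤ → Submodule K M) (i : ℕ) (j : ℤ) : Prop :=
  ∀ f ∈ KCdeg K n M g i j, kdOut K n M i f = 0 → f ∈ LinearMap.range (kd K n M i)

end Koszul

/-- The grading of a homogeneous ideal `I ⊆ K[x_1,…,x_n]` by `K`-subspaces. -/
noncomputable def idealGrading {n : ℕ} (I : Ideal (PolyR K n)) (j : ℤ) : Submodule K ↥I :=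
  Submodule.comap ((Submodule.subtype I).restrictScalars K)
    (if 0 ≤ j then Submodule.restrictScalars K
        (MvPolynomial.homogeneousSubmodule (Fin n) K j.toNat) else ⊥)

/-- The grading of the quotient `K[x_1,…,x_n]/I` by a homogeneous ideal. -/
noncomputable def quotGrading {n : ℕ} (I : Ideal (PolyR K n)) (j : ℤ) :
    Submodule K (PolyR K n ⧸ I) :=
  Submodule.map ((Submodule.mkQ I).restrictScalars K)
    (if 0 ≤ j then Submodule.restrictScalars K
        (MvPolynomial.homogeneousSubmodule (Fin n) K j.toNat) else ⊥)

/-- The Green–Lazarsfeld property `N_{e,p}` for a homogeneous ideal `I`: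
`I` is generated in degree `e` and `β_{i,j}(I) = 0` for all `i < p` and `j ≠ i + e`. -/
noncomputable def PropertyN {n : ℕ} (I : Ideal (PolyR K n)) (e : ℕ) (p : ℤ) : Prop :=
  I = Ideal.span {f | f ∈ I ∧ MvPolynomial.IsHomogeneous f e} ∧
  ∀ (i : ℕ) (j : ℤ), (i : ℤ) < p → j ≠ (i : ℤ) + e →
    BettiZero K n ↥I (idealGrading K I) i j

/-- The graded maximal ideal `(x_1,…,x_n)`. -/
noncomputable def maxIdeal (n : ℕ) : Ideal (PolyR K n) :=
  Ideal.span (Set.range MvPolynomial.X)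

/-- `depth M ≥ k`: there exists an `M`-regular sequence of length at least `k` inside
the graded maximal ideal `(x_1,…,x_n)`. -/
noncomputable def DepthGE {n : ℕ} (M : Type) [AddCommGroup M] [Module (PolyR K n) M]
    (k : ℤ) : Prop :=
  ∃ rs : List (PolyR K n), k ≤ (rs.length : ℤ) ∧ (∀ r ∈ rs, r ∈ maxIdeal K n) ∧
    RingTheory.Sequence.IsRegular M rs

/-- The Stanley–Reisner ring `K[Δ]`. -/
abbrev SRRing {n : ℕ} (Δ : Set (Finset (Fin n))) : Type := PolyR K n ⧸ srIdeal K Δ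
/-! ## Graphs, cycles, chords, clique complexes, f-vectors -/

/-- The clique complex of a graph: faces are the (finite) cliques. -/
def cliqueComplexC {V : Type} (G : SimpleGraph V) : Set (Finset V) :=
  {F | G.IsClique ↑F}

/-- The 1-skeleton of a simplicial complex, as a simple graph. -/
def oneSkeleton {n : ℕ} (Δ : Set (Finset (Fin n))) : SimpleGraph (Fin n) where
  Adj a b := a ≠ b ∧ ({a, b} : Finset (Fin n)) ∈ Δ
  symm := ⟨fun a b h => ⟨h.1.symm, by rw [Finset.pair_comm]; exact h.2⟩⟩
  loopless := ⟨fun a h => h.1 rfl⟩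

/-- A cycle (walk) has a chord: an edge of `G` joining two vertices of the cycle
which is not an edge of the cycle. -/
def HasChord {V : Type} {G : SimpleGraph V} {v : V} (c : G.Walk v v) : Prop :=
  ∃ a b, a ∈ c.support ∧ b ∈ c.support ∧ G.Adj a b ∧ s(a, b) ∉ c.edges

/-- Every cycle of `G` of length at most `r` (and at least `4`, so that a chord can exist)
has a chord. -/
def ChordalUpTo {V : Type} (G : SimpleGraph V) (r : ℕ) : Prop :=
  ∀ ⦃v : V⦄ (c : G.Walk v v), c.IsCycle → 4 ≤ c.length → c.length ≤ r → HasChord c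

/-- `G` is chordal: every cycle of length at least 4 has a chord. -/
def IsChordalGraph {V : Type} (G : SimpleGraph V) : Prop :=
  ∀ ⦃v : V⦄ (c : G.Walk v v), c.IsCycle → 4 ≤ c.length → HasChord c

/-- `G` is bipartite. -/
def IsBipartite {V : Type} (G : SimpleGraph V) : Prop :=
  ∃ f : V → Bool, ∀ a b, G.Adj a b → f a ≠ f b

/-- The cycle graph on `m` vertices. -/
def cycleGraph (m : ℕ) : SimpleGraph (Fin m) where
  Adj a b := a ≠ b ∧ ((a.val + 1) % m = b.val ∨ (b.val + 1) % m = a.val)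
  symm := ⟨fun a b h => ⟨h.1.symm, h.2.symm⟩⟩
  loopless := ⟨fun a h => h.1 rfl⟩

/-- The edge ideal `I(G)` of a graph on `[n]`. -/
noncomputable def edgeIdeal {n : ℕ} (G : SimpleGraph (Fin n)) : Ideal (PolyR K n) :=
  Ideal.span {f | ∃ a b, G.Adj a b ∧ f = MvPolynomial.X a * MvPolynomial.X b}

/-- A homogeneous ideal generated in degree `e` has a linear resolution:
`β_{i,j} = 0` whenever `j ≠ i + e`. -/
noncomputable def HasLinearResolution {n : ℕ} (I : Ideal (PolyR K n)) (e : ℕ) : Prop :=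
  I = Ideal.span {f | f ∈ I ∧ MvPolynomial.IsHomogeneous f e} ∧
  ∀ (i : ℕ) (j : ℤ), j ≠ (i : ℤ) + e → BettiZero K n ↥I (idealGrading K I) i j

/-- The number of faces of `Δ` of cardinality `k` (so `faceCount Δ k = f_{k-1}`). -/
noncomputable def faceCount {n : ℕ} (Δ : Set (Finset (Fin n))) (k : ℕ) : ℕ :=
  Set.ncard {F | F ∈ Δ ∧ F.card = k}

/-- The set of facets (maximal faces) of `Δ`. -/
def facetSet {n : ℕ} (Δ : Set (Finset (Fin n))) : Set (Finset (Fin n)) :=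
  {F | F ∈ Δ ∧ ∀ G ∈ Δ, F ⊆ G → F = G}

/-- The complex on the vertices of the `r`-cycle whose facets are the complements
`V(C) \ {i, j}` of the non-adjacent (non-consecutive) pairs of vertices of the cycle. -/
def GammaC (r : ℕ) : Set (Finset (Fin r)) :=
  {G | ∃ i j : Fin r, i ≠ j ∧ ¬ (cycleGraph r).Adj i j ∧ G ⊆ ({i, j} : Finset (Fin r))ᶜ}


/-! ## Auxiliary development for the proof -/

section Aux

variable {n : ℕ}

open Finsupp

/-- Restriction of a complex to a vertex subset. -/
def resC (X : Set (Finset (Fin n))) (S : Finset (Fin n)) : Set (Finset (Fin n)) :=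
  {F | F ∈ X ∧ F ⊆ S}

/-- Deletion of a vertex. -/
def delV (X : Set (Finset (Fin n))) (w : Fin n) : Set (Finset (Fin n)) :=
  {F | F ∈ X ∧ w ∉ F}

lemma mem_resC {X : Set (Finset (Fin n))} {S F} : F ∈ resC X S ↔ F ∈ X ∧ F ⊆ S := Iff.rfl

lemma mem_delV {X : Set (Finset (Fin n))} {w F} : F ∈ delV X w ↔ F ∈ X ∧ w ∉ F := Iff.rfl

lemma mem_link {X : Set (Finset (Fin n))} {F G} :
    G ∈ link X F ↔ Disjoint F G ∧ F ∪ G ∈ X := Iff.rfl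

lemma resC_isComplex {X : Set (Finset (Fin n))} (hX : IsComplex X) (S) :
    IsComplex (resC X S) := by
  refine ⟨⟨hX.1, Finset.empty_subset S⟩, ?_⟩
  rintro F ⟨hF, hFS⟩ G hG
  exact ⟨hX.2 F hF G hG, hG.trans hFS⟩

lemma delV_isComplex {X : Set (Finset (Fin n))} (hX : IsComplex X) (w) :
    IsComplex (delV X w) := by
  refine ⟨⟨hX.1, Finset.notMem_empty w⟩, ?_⟩
  rintro F ⟨hF, hwF⟩ G hG
  exact ⟨hX.2 F hF G hG, fun hw => hwF (hG hw)⟩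

lemma link_isComplex {X : Set (Finset (Fin n))} (hX : IsComplex X) {F} (hF : F ∈ X) :
    IsComplex (link X F) := by
  refine ⟨⟨Finset.disjoint_empty_right F, by rwa [Finset.union_empty]⟩, ?_⟩
  rintro G ⟨hdG, hFG⟩ H hH
  exact ⟨Finset.disjoint_of_subset_right hH hdG,
    hX.2 _ hFG _ (Finset.union_subset_union_right hH)⟩

lemma link_sub {X : Set (Finset (Fin n))} (hX : IsComplex X) {F} :
    ∀ G ∈ link X F, G ∈ X := by
  rintro G ⟨_, hFG⟩
  exact hX.2 _ hFG _ Finset.subset_union_right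

lemma link_empty (X : Set (Finset (Fin n))) : link X ∅ = X := by
  ext G; simp [mem_link]

lemma link_link {X : Set (Finset (Fin n))} {F G : Finset (Fin n)} (hd : Disjoint F G) :
    link (link X F) G = link X (F ∪ G) := by
  ext H
  simp only [mem_link]
  constructor
  · rintro ⟨h1, h2, h3⟩
    rw [Finset.disjoint_union_right] at h2
    exact ⟨Finset.disjoint_union_left.2 ⟨h2.2, h1⟩, by rwa [Finset.union_assoc]⟩
  · rintro ⟨h1, h2⟩
    rw [Finset.disjoint_union_left] at h1
    exact ⟨h1.2, Finset.disjoint_union_right.2 ⟨hd, h1.1⟩, by rwa [Finset.union_assoc] at h2⟩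

lemma delV_resC (X : Set (Finset (Fin n))) (S) (w) :
    delV (resC X S) w = resC X (S.erase w) := by
  ext F
  simp only [mem_delV, mem_resC, Finset.subset_erase]
  tauto

lemma link_resC {X : Set (Finset (Fin n))} {S : Finset (Fin n)} {w : Fin n} (hw : w ∈ S) :
    link (resC X S) {w} = resC (link X {w}) (S.erase w) := by
  ext G
  simp only [mem_link, mem_resC, Finset.disjoint_singleton_left, ← Finset.insert_eq,
    Finset.insert_subset_iff, Finset.subset_erase]
  constructor
  · rintro ⟨h1, h2, _, h4⟩
    exact ⟨⟨by simpa using h1, h2⟩, h4, h1⟩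
  · rintro ⟨⟨h1, h2⟩, h3, h4⟩
    exact ⟨by simpa using h1, h2, hw, h3⟩

lemma resC_self {X : Set (Finset (Fin n))} {U S : Finset (Fin n)}
    (hU : ∀ F ∈ X, F ⊆ U) (hUS : U ⊆ S) : resC X S = X := by
  ext F
  exact ⟨fun h => h.1, fun h => ⟨h, (hU F h).trans hUS⟩⟩

lemma resC_erase_nonvertex {X : Set (Finset (Fin n))} (hX : IsComplex X) {w}
    (hw : ({w} : Finset (Fin n)) ∉ X) (S) : resC X S = resC X (S.erase w) := by
  ext F
  simp only [mem_resC, Finset.subset_erase]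
  refine ⟨fun ⟨h1, h2⟩ => ⟨h1, h2, fun hwF => hw ?_⟩, fun ⟨h1, h2⟩ => ⟨h1, h2.1⟩⟩
  exact hX.2 F h1 {w} (Finset.singleton_subset_iff.2 hwF)

end Aux

section Signs

variable {n : ℕ} (K : Type) [Field K]

/-- The sign of a vertex in a face. -/
noncomputable def sgn (v : Fin n) (F : Finset (Fin n)) : K :=
  (-1) ^ (F.filter (fun w => w < v)).card

lemma sgn_mul_self (v : Fin n) (F : Finset (Fin n)) : sgn K v F * sgn K v F = 1 := by
  rw [sgn, ← pow_add, ← two_mul, pow_mul]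
  norm_num

lemma sgn_insert_self {w : Fin n} {G : Finset (Fin n)} (hw : w ∉ G) :
    sgn K w (insert w G) = sgn K w G := by
  rw [sgn, sgn, Finset.filter_insert, if_neg (lt_irrefl w)]

lemma sgn_erase_of_lt {v x : Fin n} {F : Finset (Fin n)} (hv : v ∈ F) (hlt : v < x) :
    sgn K x (F.erase v) = - sgn K x F := by
  have hmemf : v ∈ F.filter (fun w => w < x) := Finset.mem_filter.2 ⟨hv, hlt⟩
  rw [sgn, sgn, Finset.filter_erase, Finset.card_erase_of_mem hmemf]
  have h1 : 1 ≤ (F.filter (fun w => w < x)).card := Finset.card_pos.2 ⟨v, hmemf⟩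
  have h2 : ((-1 : K)) ^ (F.filter (fun w => w < x)).card
      = (-1) ^ ((F.filter (fun w => w < x)).card - 1) * (-1) := by
    rw [← pow_succ, Nat.sub_add_cancel h1]
  rw [h2]
  ring

lemma sgn_erase_of_not_lt {v x : Fin n} {F : Finset (Fin n)} (h : ¬ v < x) :
    sgn K x (F.erase v) = sgn K x F := by
  rw [sgn, sgn, Finset.filter_erase, Finset.erase_eq_of_notMem]
  intro hmem
  exact h (Finset.mem_filter.1 hmem).2

lemma sgn_insert_of_lt {w x : Fin n} {G : Finset (Fin n)} (hw : w ∉ G) (hlt : w < x) :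
    sgn K x (insert w G) = - sgn K x G := by
  rw [sgn, sgn, Finset.filter_insert, if_pos hlt, Finset.card_insert_of_notMem
    (fun hmem => hw (Finset.mem_filter.1 hmem).1), pow_succ]
  ring

lemma sgn_insert_of_not_lt {w x : Fin n} {G : Finset (Fin n)} (h : ¬ w < x) :
    sgn K x (insert w G) = sgn K x G := by
  rw [sgn, sgn, Finset.filter_insert, if_neg h]

/-- Antisymmetry used to prove `∂∘∂ = 0`. -/
lemma sgn_antisymm {v x : Fin n} {F : Finset (Fin n)} (hv : v ∈ F) (hx : x ∈ F) (hne : v ≠ x) :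
    sgn K v F * sgn K x (F.erase v) + sgn K x F * sgn K v (F.erase x) = 0 := by
  rcases lt_or_gt_of_ne hne with h | h
  · rw [sgn_erase_of_lt K hv h, sgn_erase_of_not_lt K (not_lt_of_gt h)]
    ring
  · rw [sgn_erase_of_lt K hx h, sgn_erase_of_not_lt K (not_lt_of_gt h)]
    ring

/-- Sign identity used for the map `L_w`. -/
lemma sgn_lw {w x : Fin n} {G : Finset (Fin n)} (hw : w ∉ G) (hx : x ∈ G) :
    sgn K w G * sgn K x (insert w G) = -(sgn K x G * sgn K w (G.erase x)) := by
  have hne : w ≠ x := fun h => hw (h ▸ hx)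
  rcases lt_or_gt_of_ne hne with h | h
  · rw [sgn_insert_of_lt K hw h, sgn_erase_of_not_lt K (not_lt_of_gt h)]
    ring
  · rw [sgn_insert_of_not_lt K (not_lt_of_gt h), sgn_erase_of_lt K hx h]
    ring

end Signs

section BoundaryRewriting

variable (K : Type) [Field K] {n : ℕ}

open Finsupp

/-- Generator of the chain group attached to a finset (zero if it is not a face). -/
noncomputable def sgl (X : Set (Finset (Fin n))) (k : ℕ) (A : Finset (Fin n)) :
    Chains K X k :=
  open Classical in
  if h : A ∈ X ∧ A.card = k then Finsupp.single ⟨A, h⟩ 1 else 0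

lemma sgl_pos {X : Set (Finset (Fin n))} {k : ℕ} {A : Finset (Fin n)}
    (h : A ∈ X ∧ A.card = k) : sgl K X k A = Finsupp.single ⟨A, h⟩ 1 := by
  rw [sgl, dif_pos h]

lemma sgl_congr {X : Set (Finset (Fin n))} {k : ℕ} {A B : Finset (Fin n)} (h : A = B) :
    sgl K X k A = sgl K X k B := by rw [h]

lemma single_eq_sgl {X : Set (Finset (Fin n))} {k : ℕ}
    (a : {F : Finset (Fin n) // F ∈ X ∧ F.card = k}) :
    Finsupp.single a (1 : K) = sgl K X k a.1 := by
  rw [sgl_pos K a.2]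

lemma boundaryMap_single {X : Set (Finset (Fin n))} {k : ℕ}
    (a : {F : Finset (Fin n) // F ∈ X ∧ F.card = k + 1}) (c : K) :
    boundaryMap K X k (Finsupp.single a c) = c • boundaryElt K X k a := by
  rw [boundaryMap, Finsupp.lsum_single, LinearMap.toSpanSingleton_apply]

lemma boundaryElt_eq_sum {X : Set (Finset (Fin n))} (hX : IsComplex X) {k : ℕ}
    (a : {F : Finset (Fin n) // F ∈ X ∧ F.card = k + 1}) :
    boundaryElt K X k a = ∑ v ∈ a.1, sgn K v a.1 • sgl K X k (a.1.erase v) := by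
  rw [boundaryElt, ← Finset.sum_attach a.1
    (fun v => sgn K v a.1 • sgl K X k (a.1.erase v))]
  refine Finset.sum_congr rfl fun v _ => ?_
  have hmem : a.1.erase v ∈ X := hX.2 _ a.2.1 _ (Finset.erase_subset _ _)
  have hcard : (a.1.erase v).card = k := by
    rw [Finset.card_erase_of_mem v.2, a.2.2]; omega
  rw [dif_pos hmem, sgl_pos K ⟨hmem, hcard⟩]
  rfl

/-- The boundary of a valid `sgl`. -/
lemma boundaryMap_sgl {X : Set (Finset (Fin n))} (hX : IsComplex X) {k : ℕ}
    {A : Finset (Fin n)} (hA : A ∈ X) (hc : A.card = k + 1) :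
    boundaryMap K X k (sgl K X (k + 1) A) =
      ∑ v ∈ A, sgn K v A • sgl K X k (A.erase v) := by
  rw [sgl_pos K ⟨hA, hc⟩, boundaryMap_single, one_smul,
    boundaryElt_eq_sum K hX ⟨A, hA, hc⟩]

/-- `∂ ∘ ∂ = 0`. -/
lemma boundary_boundary {X : Set (Finset (Fin n))} (hX : IsComplex X) {k : ℕ}
    (x : Chains K X (k + 2)) :
    boundaryMap K X k (boundaryMap K X (k + 1) x) = 0 := by
  classical
  induction x using Finsupp.induction_linear with
  | zero => simp
  | add f g hf hg => rw [map_add, map_add, hf, hg, add_zero]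
  | single a c =>
    rw [boundaryMap_single, map_smul, boundaryElt_eq_sum K hX a, map_sum]
    have hterm : ∀ v ∈ a.1, boundaryMap K X k (sgn K v a.1 • sgl K X k.succ (a.1.erase v))
        = ∑ x ∈ a.1.erase v, (sgn K v a.1 * sgn K x (a.1.erase v)) •
            sgl K X k ((a.1.erase v).erase x) := by
      intro v hv
      have hmem : a.1.erase v ∈ X := hX.2 _ a.2.1 _ (Finset.erase_subset _ _)
      have hcard : (a.1.erase v).card = k + 1 := by
        rw [Finset.card_erase_of_mem hv, a.2.2]; omega
      rw [map_smul, boundaryMap_sgl K hX hmem hcard, Finset.smul_sum]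
      exact Finset.sum_congr rfl fun x _ => by rw [smul_smul]
    rw [Finset.sum_congr rfl hterm]
    have hzero : ∑ v ∈ a.1, ∑ x ∈ a.1.erase v, (sgn K v a.1 * sgn K x (a.1.erase v)) •
        sgl K X k ((a.1.erase v).erase x) = 0 := by
      have hguard : ∀ v ∈ a.1, ∑ x ∈ a.1.erase v,
          (sgn K v a.1 * sgn K x (a.1.erase v)) • sgl K X k ((a.1.erase v).erase x)
          = ∑ x ∈ a.1, (if x = v then 0 else (sgn K v a.1 * sgn K x (a.1.erase v)) •
              sgl K X k ((a.1.erase v).erase x)) := by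
        intro v hv
        rw [← Finset.sum_erase_add a.1 _ hv, if_pos rfl, add_zero]
        exact Finset.sum_congr rfl fun x hx =>
          (if_neg (Finset.ne_of_mem_erase hx)).symm
      rw [Finset.sum_congr rfl hguard, ← Finset.sum_product']
      refine Finset.sum_involution (fun p _ => (p.2, p.1)) ?_ ?_ ?_ ?_
      · rintro ⟨v, x⟩ hp
        simp only
        by_cases hvx : v = x
        · subst hvx; simp
        · rw [if_neg (Ne.symm hvx), if_neg hvx,
            sgl_congr K (Finset.erase_right_comm (s := a.1) (a := x) (b := v)), ← add_smul]
          have hv : v ∈ a.1 := (Finset.mem_product.1 hp).1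
          have hx : x ∈ a.1 := (Finset.mem_product.1 hp).2
          rw [show sgn K v a.1 * sgn K x (a.1.erase v) + sgn K x a.1 * sgn K v (a.1.erase x)
            = 0 from sgn_antisymm K hv hx hvx, zero_smul]
      · rintro ⟨v, x⟩ hp hne
        by_cases hvx : v = x
        · subst hvx; simp at hne
        · simp only [Prod.mk.injEq, ne_eq]
          rintro ⟨h1, h2⟩; exact hvx h1.symm
      · rintro ⟨v, x⟩ hp
        rw [Finset.mem_product] at hp ⊢
        exact ⟨hp.2, hp.1⟩
      · rintro ⟨v, x⟩ _
        rfl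
    rw [hzero, smul_zero]

end BoundaryRewriting

section Maps

variable (K : Type) [Field K] {n : ℕ}

open Finsupp

/-- Inclusion of chains of a subcomplex. -/
noncomputable def inclM {X Y : Set (Finset (Fin n))} (h : ∀ F, F ∈ X → F ∈ Y) (k : ℕ) :
    Chains K X k →ₗ[K] Chains K Y k :=
  Finsupp.lsum K fun a =>
    LinearMap.toSpanSingleton K _ (Finsupp.single ⟨a.1, h a.1 a.2.1, a.2.2⟩ (1 : K))

/-- The map `G ↦ ± (G ∪ {w})` from link chains to chains. -/
noncomputable def lwM (X : Set (Finset (Fin n))) (w : Fin n) (k : ℕ) :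
    Chains K (link X {w}) k →ₗ[K] Chains K X (k + 1) :=
  Finsupp.lsum K fun a =>
    LinearMap.toSpanSingleton K _ (sgn K w a.1 •
      Finsupp.single ⟨insert w a.1,
        by have := a.2.1.2; rwa [← Finset.insert_eq] at this,
        by rw [Finset.card_insert_of_notMem (Finset.disjoint_singleton_left.1 a.2.1.1), a.2.2]⟩
        (1 : K))

/-- Projection onto the `w`-part, landing in link chains. -/
noncomputable def pwM (X : Set (Finset (Fin n))) (w : Fin n) (k : ℕ) :
    Chains K X (k + 1) →ₗ[K] Chains K (link X {w}) k :=
  Finsupp.lsum K fun a =>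
    LinearMap.toSpanSingleton K _
      (open Classical in
      if h : w ∈ a.1 then sgn K w a.1 •
        Finsupp.single ⟨a.1.erase w,
          ⟨Finset.disjoint_singleton_left.2 (Finset.notMem_erase w a.1),
            by rw [← Finset.insert_eq, Finset.insert_erase h]; exact a.2.1⟩,
          by rw [Finset.card_erase_of_mem h, a.2.2]; omega⟩ (1 : K)
      else 0)

/-- Projection onto the `w`-free part. -/
noncomputable def pfM (X : Set (Finset (Fin n))) (w : Fin n) (k : ℕ) :
    Chains K X k →ₗ[K] Chains K (delV X w) k :=
  Finsupp.lsum K fun a =>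
    LinearMap.toSpanSingleton K _
      (open Classical in
      if h : w ∈ a.1 then 0
      else Finsupp.single ⟨a.1, ⟨a.2.1, h⟩, a.2.2⟩ (1 : K))

variable {X Y : Set (Finset (Fin n))}

lemma inclM_single (h : ∀ F, F ∈ X → F ∈ Y) {k : ℕ}
    {a : {F : Finset (Fin n) // F ∈ X ∧ F.card = k}} {c : K} :
    inclM K h k (Finsupp.single a c) = c • sgl K Y k a.1 := by
  rw [inclM, Finsupp.lsum_single, LinearMap.toSpanSingleton_apply,
    sgl_pos K (X := Y) ⟨h a.1 a.2.1, a.2.2⟩]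

lemma lwM_single {w : Fin n} {k : ℕ}
    {a : {F : Finset (Fin n) // F ∈ link X {w} ∧ F.card = k}} {c : K} :
    lwM K X w k (Finsupp.single a c) = (c * sgn K w a.1) • sgl K X (k + 1) (insert w a.1) := by
  have hmem : insert w a.1 ∈ X := by
    have := a.2.1.2; rwa [← Finset.insert_eq] at this
  have hcard : (insert w a.1).card = k + 1 := by
    rw [Finset.card_insert_of_notMem (Finset.disjoint_singleton_left.1 a.2.1.1), a.2.2]
  rw [lwM, Finsupp.lsum_single, LinearMap.toSpanSingleton_apply,
    sgl_pos K (X := X) ⟨hmem, hcard⟩, smul_smul]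

lemma pwM_single_mem {w : Fin n} {k : ℕ}
    {a : {F : Finset (Fin n) // F ∈ X ∧ F.card = k + 1}} {c : K} (h : w ∈ a.1) :
    pwM K X w k (Finsupp.single a c)
      = (c * sgn K w a.1) • sgl K (link X {w}) k (a.1.erase w) := by
  have hmem : a.1.erase w ∈ link X {w} :=
    ⟨Finset.disjoint_singleton_left.2 (Finset.notMem_erase w a.1),
      by rw [← Finset.insert_eq, Finset.insert_erase h]; exact a.2.1⟩
  have hcard : (a.1.erase w).card = k := by rw [Finset.card_erase_of_mem h, a.2.2]; omega
  rw [pwM, Finsupp.lsum_single, LinearMap.toSpanSingleton_apply, dif_pos h,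
    sgl_pos K (X := link X {w}) ⟨hmem, hcard⟩, smul_smul]

lemma pwM_single_not {w : Fin n} {k : ℕ}
    {a : {F : Finset (Fin n) // F ∈ X ∧ F.card = k + 1}} {c : K} (h : w ∉ a.1) :
    pwM K X w k (Finsupp.single a c) = 0 := by
  rw [pwM, Finsupp.lsum_single, LinearMap.toSpanSingleton_apply, dif_neg h, smul_zero]

lemma pfM_single_mem {w : Fin n} {k : ℕ}
    {a : {F : Finset (Fin n) // F ∈ X ∧ F.card = k}} {c : K} (h : w ∈ a.1) :
    pfM K X w k (Finsupp.single a c) = 0 := by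
  rw [pfM, Finsupp.lsum_single, LinearMap.toSpanSingleton_apply, dif_pos h, smul_zero]

lemma pfM_single_not {w : Fin n} {k : ℕ}
    {a : {F : Finset (Fin n) // F ∈ X ∧ F.card = k}} {c : K} (h : w ∉ a.1) :
    pfM K X w k (Finsupp.single a c) = c • sgl K (delV X w) k a.1 := by
  rw [pfM, Finsupp.lsum_single, LinearMap.toSpanSingleton_apply, dif_neg h,
    sgl_pos K (X := delV X w) (A := a.1) ⟨⟨a.2.1, h⟩, a.2.2⟩]

lemma inclM_sgl (h : ∀ F, F ∈ X → F ∈ Y) {k : ℕ} {A : Finset (Fin n)}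
    (hA : A ∈ X) (hc : A.card = k) : inclM K h k (sgl K X k A) = sgl K Y k A := by
  rw [sgl_pos K (X := X) ⟨hA, hc⟩, inclM_single, one_smul]

lemma lwM_sgl {w : Fin n} {k : ℕ} {A : Finset (Fin n)}
    (hA : A ∈ link X {w}) (hc : A.card = k) :
    lwM K X w k (sgl K (link X {w}) k A) = sgn K w A • sgl K X (k + 1) (insert w A) := by
  rw [sgl_pos K (X := link X {w}) ⟨hA, hc⟩, lwM_single, one_mul]

lemma pwM_sgl_mem {w : Fin n} {k : ℕ} {A : Finset (Fin n)}
    (hA : A ∈ X) (hc : A.card = k + 1) (h : w ∈ A) :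
    pwM K X w k (sgl K X (k + 1) A) = sgn K w A • sgl K (link X {w}) k (A.erase w) := by
  rw [sgl_pos K (X := X) ⟨hA, hc⟩, pwM_single_mem K h, one_mul]

lemma pwM_sgl_not {w : Fin n} {k : ℕ} {A : Finset (Fin n)}
    (hA : A ∈ X) (hc : A.card = k + 1) (h : w ∉ A) :
    pwM K X w k (sgl K X (k + 1) A) = 0 := by
  rw [sgl_pos K (X := X) ⟨hA, hc⟩, pwM_single_not K h]

lemma pfM_sgl_mem {w : Fin n} {k : ℕ} {A : Finset (Fin n)}
    (hA : A ∈ X) (hc : A.card = k) (h : w ∈ A) :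
    pfM K X w k (sgl K X k A) = 0 := by
  rw [sgl_pos K (X := X) ⟨hA, hc⟩, pfM_single_mem K h]

lemma pfM_sgl_not' {w : Fin n} {k : ℕ} {A : Finset (Fin n)}
    (hA : A ∈ X) (hc : A.card = k) (h : w ∉ A) :
    pfM K X w k (sgl K X k A) = sgl K (delV X w) k A := by
  rw [sgl_pos K (X := X) ⟨hA, hc⟩, pfM_single_not K h, one_smul]

lemma single_eq_smul_sgl {k : ℕ} {a : {F : Finset (Fin n) // F ∈ X ∧ F.card = k}} {c : K} :
    Finsupp.single a c = c • sgl K X k a.1 := by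
  rw [sgl_pos K (X := X) a.2, Finsupp.smul_single, smul_eq_mul, mul_one]

/-- (I1) `π_w ∘ L_w = id`. -/
lemma pw_lw {w : Fin n} {k : ℕ} (γ : Chains K (link X {w}) k) :
    pwM K X w k (lwM K X w k γ) = γ := by
  induction γ using Finsupp.induction_linear with
  | zero => simp
  | add f g hf hg => rw [map_add, map_add, hf, hg]
  | single a c =>
    have hw' : w ∉ a.1 := Finset.disjoint_singleton_left.1 a.2.1.1
    have hmem : insert w a.1 ∈ X := by
      have := a.2.1.2; rwa [← Finset.insert_eq] at this
    have hcard : (insert w a.1).card = k + 1 := by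
      rw [Finset.card_insert_of_notMem hw', a.2.2]
    rw [lwM_single, map_smul, pwM_sgl_mem K hmem hcard (Finset.mem_insert_self w a.1),
      sgl_congr K (Finset.erase_insert hw'), sgn_insert_self K hw', smul_smul,
      mul_assoc, sgn_mul_self, mul_one, ← single_eq_smul_sgl]

/-- (I2) `π_free ∘ incl = id` on deleted chains. -/
lemma pf_incl {w : Fin n} {k : ℕ} (u : Chains K (delV X w) k) :
    pfM K X w k (inclM K (fun F (hF : F ∈ delV X w) => hF.1) k u) = u := by
  induction u using Finsupp.induction_linear with
  | zero => simp
  | add f g hf hg => rw [map_add, map_add, hf, hg]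
  | single a c =>
    rw [inclM_single, map_smul, pfM_sgl_not' K a.2.1.1 a.2.2 a.2.1.2,
      ← single_eq_smul_sgl]

/-- (I4) `π_w` kills `w`-free chains from the deletion. -/
lemma pw_incl_del {w : Fin n} {k : ℕ} (u : Chains K (delV X w) (k + 1)) :
    pwM K X w k (inclM K (fun F (hF : F ∈ delV X w) => hF.1) (k + 1) u) = 0 := by
  induction u using Finsupp.induction_linear with
  | zero => simp
  | add f g hf hg => rw [map_add, map_add, hf, hg, add_zero]
  | single a c =>
    rw [inclM_single, map_smul, pwM_sgl_not K a.2.1.1 a.2.2 a.2.1.2, smul_zero]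

/-- (I5) `π_w` kills `w`-free chains from the link. -/
lemma pw_incl_link (hX : IsComplex X) {w : Fin n} {k : ℕ}
    (γ : Chains K (link X {w}) (k + 1)) :
    pwM K X w k (inclM K (link_sub hX) (k + 1) γ) = 0 := by
  induction γ using Finsupp.induction_linear with
  | zero => simp
  | add f g hf hg => rw [map_add, map_add, hf, hg, add_zero]
  | single a c =>
    rw [inclM_single, map_smul, pwM_sgl_not K (link_sub hX a.1 a.2.1) a.2.2
      (Finset.disjoint_singleton_left.1 a.2.1.1), smul_zero]

/-- The inclusion of the link into the deletion. -/
lemma link_sub_del (hX : IsComplex X) (w : Fin n) :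
    ∀ F, F ∈ link X {w} → F ∈ delV X w := fun F hF =>
  show F ∈ X ∧ w ∉ F from ⟨link_sub hX F hF, Finset.disjoint_singleton_left.1 hF.1⟩

/-- (I6) `π_free ∘ incl_link = incl_{link → del}`. -/
lemma pf_incl_link (hX : IsComplex X) {w : Fin n} {k : ℕ}
    (γ : Chains K (link X {w}) k) :
    pfM K X w k (inclM K (link_sub hX) k γ)
      = inclM K (link_sub_del hX w) k γ := by
  induction γ using Finsupp.induction_linear with
  | zero => simp
  | add f g hf hg => simp only [map_add, hf, hg]
  | single a c =>
    rw [inclM_single, map_smul, pfM_sgl_not' K (link_sub hX a.1 a.2.1) a.2.2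
      (Finset.disjoint_singleton_left.1 a.2.1.1)]
    rw [inclM_single]

/-- (I7) decomposition of a chain into its `w`-free and `w`-parts. -/
lemma decompM {w : Fin n} {k : ℕ} (z : Chains K X (k + 1)) :
    z = inclM K (fun F (hF : F ∈ delV X w) => hF.1) (k + 1) (pfM K X w (k + 1) z)
        + lwM K X w k (pwM K X w k z) := by
  induction z using Finsupp.induction_linear with
  | zero => simp
  | add f g hf hg =>
    rw [map_add, map_add, map_add, map_add]
    calc f + g = (inclM K _ (k+1) (pfM K X w (k+1) f) + lwM K X w k (pwM K X w k f))
        + (inclM K _ (k+1) (pfM K X w (k+1) g) + lwM K X w k (pwM K X w k g)) := by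
          rw [← hf, ← hg]
      _ = _ := by abel
  | single a c =>
    by_cases h : w ∈ a.1
    · rw [pfM_single_mem K h, pwM_single_mem K h, map_zero, zero_add]
      have h1 : a.1.erase w ∈ link X {w} :=
        ⟨Finset.disjoint_singleton_left.2 (Finset.notMem_erase w a.1),
          by rw [← Finset.insert_eq, Finset.insert_erase h]; exact a.2.1⟩
      have h2 : (a.1.erase w).card = k := by rw [Finset.card_erase_of_mem h, a.2.2]; omega
      rw [map_smul, lwM_sgl K h1 h2, smul_smul, mul_assoc,
        show sgn K w (a.1.erase w) = sgn K w a.1 from sgn_erase_of_not_lt K (lt_irrefl w),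
        sgn_mul_self, mul_one, sgl_congr K (Finset.insert_erase h), ← single_eq_smul_sgl]
    · rw [pfM_single_not K h, pwM_single_not K h, map_zero, add_zero, map_smul,
        inclM_sgl K (X := delV X w) _ ⟨a.2.1, h⟩ a.2.2, ← single_eq_smul_sgl]

/-- (I8) inclusion commutes with boundaries. -/
lemma bd_incl (hX : IsComplex X) (hY : IsComplex Y) (h : ∀ F, F ∈ X → F ∈ Y) {k : ℕ}
    (u : Chains K X (k + 1)) :
    boundaryMap K Y k (inclM K h (k + 1) u) = inclM K h k (boundaryMap K X k u) := by
  induction u using Finsupp.induction_linear with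
  | zero => simp
  | add f g hf hg => rw [map_add, map_add, map_add, map_add, hf, hg]
  | single a c =>
    rw [inclM_single, map_smul, boundaryMap_single, map_smul,
      boundaryMap_sgl K hY (h a.1 a.2.1) a.2.2, boundaryElt_eq_sum K hX a, map_sum]
    congr 1
    refine Finset.sum_congr rfl fun v hv => ?_
    rw [map_smul, inclM_sgl K h (hX.2 _ a.2.1 _ (Finset.erase_subset _ _))
      (by rw [Finset.card_erase_of_mem hv, a.2.2]; omega)]

/-- (I9a) boundary of a lifted `0`-chain. -/
lemma bd_lw0 (hX : IsComplex X) {w : Fin n} (γ : Chains K (link X {w}) 0) :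
    boundaryMap K X 0 (lwM K X w 0 γ) = inclM K (link_sub hX) 0 γ := by
  induction γ using Finsupp.induction_linear with
  | zero => simp
  | add f g hf hg => rw [map_add, map_add, map_add, hf, hg]
  | single a c =>
    have hw' : w ∉ a.1 := Finset.disjoint_singleton_left.1 a.2.1.1
    have ha0 : a.1 = ∅ := Finset.card_eq_zero.1 a.2.2
    have hmem : insert w a.1 ∈ X := by
      have := a.2.1.2; rwa [← Finset.insert_eq] at this
    have hcard : (insert w a.1).card = 0 + 1 := by
      rw [Finset.card_insert_of_notMem hw', a.2.2]
    rw [lwM_single, map_smul, boundaryMap_sgl K hX hmem hcard, inclM_single]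
    rw [Finset.sum_eq_single_of_mem w (Finset.mem_insert_self w a.1)
      (fun x hx hne => by
        rcases Finset.mem_insert.1 hx with h | h
        · exact absurd h hne
        · rw [ha0] at h; exact absurd h (Finset.notMem_empty x))]
    rw [sgl_congr K (Finset.erase_insert hw'), sgn_insert_self K hw',
      smul_smul, mul_assoc, sgn_mul_self, mul_one]

/-- (I9b) boundary of a lifted chain. -/
lemma bd_lw (hX : IsComplex X) {w : Fin n} (hw : ({w} : Finset (Fin n)) ∈ X) {k : ℕ}
    (δ : Chains K (link X {w}) (k + 1)) :
    boundaryMap K X (k + 1) (lwM K X w (k + 1) δ)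
      = inclM K (link_sub hX) (k + 1) δ - lwM K X w k (boundaryMap K (link X {w}) k δ) := by
  have hL : IsComplex (link X {w}) := link_isComplex hX hw
  induction δ using Finsupp.induction_linear with
  | zero => simp
  | add f g hf hg =>
    rw [map_add, map_add, map_add, map_add, map_add, hf, hg]
    abel
  | single a c =>
    have hw' : w ∉ a.1 := Finset.disjoint_singleton_left.1 a.2.1.1
    have hmem : insert w a.1 ∈ X := by
      have := a.2.1.2; rwa [← Finset.insert_eq] at this
    have hcard : (insert w a.1).card = (k + 1) + 1 := by
      rw [Finset.card_insert_of_notMem hw', a.2.2]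
    have hrhs : lwM K X w k (boundaryMap K (link X {w}) k (Finsupp.single a c))
        = c • ∑ x ∈ a.1, sgn K x a.1 • lwM K X w k (sgl K (link X {w}) k (a.1.erase x)) := by
      rw [boundaryMap_single, boundaryElt_eq_sum K hL a, map_smul, map_sum]
      congr 1
      exact Finset.sum_congr rfl fun x hx => by rw [map_smul]
    rw [lwM_single, map_smul, boundaryMap_sgl K hX hmem hcard,
      Finset.sum_insert hw', inclM_single, hrhs, smul_add]
    have hterm1 : (c * sgn K w a.1) •
        (sgn K w (insert w a.1) • sgl K X (k+1) ((insert w a.1).erase w))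
        = c • sgl K X (k + 1) a.1 := by
      rw [sgl_congr K (Finset.erase_insert hw'), sgn_insert_self K hw', smul_smul,
        mul_assoc, sgn_mul_self, mul_one]
    have hterm2 : (c * sgn K w a.1) • ∑ x ∈ a.1, sgn K x (insert w a.1) •
          sgl K X (k+1) ((insert w a.1).erase x)
        = - (c • ∑ x ∈ a.1, sgn K x a.1 • lwM K X w k (sgl K (link X {w}) k (a.1.erase x))) := by
      rw [Finset.smul_sum, Finset.smul_sum, ← Finset.sum_neg_distrib]
      refine Finset.sum_congr rfl fun x hx => ?_
      have hwx : w ≠ x := fun h => hw' (h ▸ hx)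
      have h1 : a.1.erase x ∈ link X {w} := hL.2 _ a.2.1 _ (Finset.erase_subset _ _)
      have h2 : (a.1.erase x).card = k := by
        rw [Finset.card_erase_of_mem hx, a.2.2]; omega
      rw [lwM_sgl K h1 h2, sgl_congr K (show (insert w a.1).erase x = insert w (a.1.erase x)
        from Finset.erase_insert_of_ne hwx)]
      rw [smul_smul, smul_smul, smul_smul, ← neg_smul]
      congr 1
      have hs := sgn_lw K (w := w) (x := x) (G := a.1) hw' hx
      calc c * sgn K w a.1 * sgn K x (insert w a.1)
          = c * (sgn K w a.1 * sgn K x (insert w a.1)) := by ring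
        _ = c * (-(sgn K x a.1 * sgn K w (a.1.erase x))) := by rw [hs]
        _ = -(c * sgn K x a.1 * sgn K w (a.1.erase x)) := by ring
    rw [hterm1, hterm2, sub_eq_add_neg]

end Maps

section ZB

variable (K : Type) [Field K] {n : ℕ}

open Finsupp

/-- `H̃₋₁ = 0` (the augmentation is surjective). -/
def ZB0 (X : Set (Finset (Fin n))) : Prop :=
  ∀ γ : Chains K X 0, γ ∈ LinearMap.range (boundaryMap K X 0)

/-- `H̃ₖ = 0`. -/
def ZBS (X : Set (Finset (Fin n))) (k : ℕ) : Prop :=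
  ∀ γ : Chains K X (k + 1), boundaryMap K X k γ = 0 →
    γ ∈ LinearMap.range (boundaryMap K X (k + 1))

/-- `H̃_{k-1} = 0`, uniformly in `k`. -/
def ZL (X : Set (Finset (Fin n))) : ℕ → Prop
  | 0 => ZB0 K X
  | (k + 1) => ZBS K X k

variable {X : Set (Finset (Fin n))}

lemma RHZ_of_le_neg2 {i : ℤ} (h : i ≤ -2) : ReducedHomologyZero K X i := by
  unfold ReducedHomologyZero
  rw [if_pos h]
  trivial

lemma RHZ_neg_one_iff : ReducedHomologyZero K X (-1) ↔ ZB0 K X := by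
  unfold ReducedHomologyZero
  rw [if_neg (by norm_num), if_pos rfl]
  constructor
  · intro h γ
    obtain ⟨x, hx⟩ := h γ
    exact ⟨x, hx⟩
  · intro h γ
    obtain ⟨x, hx⟩ := h γ
    exact ⟨x, hx⟩

lemma RHZ_nonneg_iff {i : ℤ} (h : 0 ≤ i) :
    ReducedHomologyZero K X i ↔ ZBS K X i.toNat := by
  unfold ReducedHomologyZero
  rw [if_neg (by omega), if_neg (by omega)]
  constructor
  · intro hk γ hγ
    exact hk (LinearMap.mem_ker.2 hγ)
  · intro hz x hx
    exact hz x (LinearMap.mem_ker.1 hx)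

lemma aug_single_vertex (hX : IsComplex X) {v : Fin n}
    (hv : ({v} : Finset (Fin n)) ∈ X) (c : K) :
    boundaryMap K X 0 (Finsupp.single ⟨{v}, hv, Finset.card_singleton v⟩ c)
      = Finsupp.single ⟨∅, hX.1, Finset.card_empty⟩ c := by
  rw [boundaryMap_single, boundaryElt_eq_sum K hX, Finset.sum_singleton,
    sgl_congr K (Finset.erase_singleton v),
    show sgn K v ({v} : Finset (Fin n)) = 1 by
      rw [sgn, Finset.filter_singleton, if_neg (lt_irrefl v), Finset.card_empty, pow_zero],
    one_smul, ← single_eq_smul_sgl K (a := ⟨∅, hX.1, Finset.card_empty⟩)]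

lemma ZB0_of_vertex (hX : IsComplex X) {v : Fin n}
    (hv : ({v} : Finset (Fin n)) ∈ X) : ZB0 K X := by
  intro γ
  have hall : ∀ b : {F : Finset (Fin n) // F ∈ X ∧ F.card = 0},
      b = ⟨∅, hX.1, Finset.card_empty⟩ :=
    fun b => Subtype.ext (Finset.card_eq_zero.1 b.2.2)
  have hγ : γ = Finsupp.single ⟨∅, hX.1, Finset.card_empty⟩
      (γ ⟨∅, hX.1, Finset.card_empty⟩) := by
    ext b
    rw [hall b, Finsupp.single_eq_same]
  exact ⟨Finsupp.single ⟨{v}, hv, Finset.card_singleton v⟩ (γ ⟨∅, hX.1, Finset.card_empty⟩),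
    by rw [aug_single_vertex K hX hv, ← hγ]⟩

lemma ZBS_of_no_faces {k : ℕ} (h : ∀ F, ¬(F ∈ X ∧ F.card = k + 1)) : ZBS K X k := by
  intro γ _
  refine ⟨0, ?_⟩
  rw [map_zero]
  ext b
  exact absurd b.2 (h b.1)

lemma ZBS_single_vertex (hX : IsComplex X) {v : Fin n}
    (hv : ({v} : Finset (Fin n)) ∈ X) (hsub : ∀ F ∈ X, F ⊆ {v}) : ZBS K X 0 := by
  intro γ hγ
  have hall : ∀ b : {F : Finset (Fin n) // F ∈ X ∧ F.card = 0 + 1},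
      b = ⟨{v}, hv, Finset.card_singleton v⟩ := fun b => Subtype.ext
    (Finset.eq_of_subset_of_card_le (hsub b.1 b.2.1)
      (by rw [b.2.2, Finset.card_singleton]))
  have hγ2 : γ = Finsupp.single ⟨{v}, hv, Finset.card_singleton v⟩
      (γ ⟨{v}, hv, Finset.card_singleton v⟩) := by
    ext b
    rw [hall b, Finsupp.single_eq_same]
  rw [hγ2, aug_single_vertex K hX hv] at hγ
  have hc0 := Finsupp.single_eq_zero.1 hγ
  refine ⟨0, ?_⟩
  rw [map_zero, hγ2, hc0, Finsupp.single_zero]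

/-- Core construction for the long-exact-sequence lemmas. -/
lemma up_core (hX : IsComplex X) {w : Fin n} (hw : ({w} : Finset (Fin n)) ∈ X) (j : ℕ)
    (hdel : ZBS K (delV X w) j) (z : Chains K X (j + 1))
    (hz : boundaryMap K X j z = 0) (δ : Chains K (link X {w}) (j + 1))
    (hδ : boundaryMap K (link X {w}) j δ = pwM K X w j z) :
    z ∈ LinearMap.range (boundaryMap K X (j + 1)) := by
  have hD : IsComplex (delV X w) := delV_isComplex hX w
  set z'' := z + boundaryMap K X (j + 1) (lwM K X w (j + 1) δ) with hz''def
  have h1 : z'' = inclM K (fun F (hF : F ∈ delV X w) => hF.1) (j + 1) (pfM K X w (j + 1) z)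
      + inclM K (link_sub hX) (j + 1) δ := by
    rw [hz''def, bd_lw K hX hw δ, hδ]
    nth_rewrite 1 [decompM K (w := w) z]
    abel
  have hpw : pwM K X w j z'' = 0 := by
    rw [h1, map_add, pw_incl_del, pw_incl_link K hX, add_zero]
  have hu_incl : inclM K (fun F (hF : F ∈ delV X w) => hF.1) (j + 1)
      (pfM K X w (j + 1) z'') = z'' := by
    nth_rewrite 2 [decompM K (w := w) z'']
    rw [hpw, map_zero, add_zero]
  have hcycle : boundaryMap K (delV X w) j (pfM K X w (j + 1) z'') = 0 := by
    have hb : boundaryMap K X j z'' = 0 := by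
      rw [hz''def, map_add, hz, boundary_boundary K hX, add_zero]
    have h2 : inclM K (fun F (hF : F ∈ delV X w) => hF.1) j
        (boundaryMap K (delV X w) j (pfM K X w (j + 1) z'')) = 0 := by
      rw [← bd_incl K hD hX _ (pfM K X w (j + 1) z''), hu_incl, hb]
    have h3 := congrArg (pfM K X w j) h2
    rwa [pf_incl, map_zero] at h3
  obtain ⟨β, hβ⟩ := hdel (pfM K X w (j + 1) z'') hcycle
  refine ⟨inclM K (fun F (hF : F ∈ delV X w) => hF.1) (j + 2) β - lwM K X w (j + 1) δ, ?_⟩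
  rw [map_sub, bd_incl K hD hX _ β, hβ, hu_incl]
  rw [hz''def]
  abel

/-- If `H̃ⱼ(del) = 0` and `H̃_{j-1}(link) = 0` then `H̃ⱼ(X) = 0`. -/
lemma ZL_up (hX : IsComplex X) {w : Fin n} (hw : ({w} : Finset (Fin n)) ∈ X) (j : ℕ)
    (hdel : ZBS K (delV X w) j) (hlink : ZL K (link X {w}) j) : ZBS K X j := by
  intro z hz
  cases j with
  | zero =>
    obtain ⟨δ, hδ⟩ := hlink (pwM K X w 0 z)
    exact up_core K hX hw 0 hdel z hz δ hδ
  | succ j' =>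
    have hD : IsComplex (delV X w) := delV_isComplex hX w
    have hcyc : boundaryMap K (link X {w}) j' (pwM K X w (j' + 1) z) = 0 := by
      have hexp : boundaryMap K X (j' + 1) z
          = inclM K (fun F (hF : F ∈ delV X w) => hF.1) (j' + 1)
              (boundaryMap K (delV X w) (j' + 1) (pfM K X w (j' + 1 + 1) z))
            + (inclM K (link_sub hX) (j' + 1) (pwM K X w (j' + 1) z)
              - lwM K X w j' (boundaryMap K (link X {w}) j' (pwM K X w (j' + 1) z))) := by
        nth_rewrite 1 [decompM K (w := w) z]
        rw [map_add, bd_incl K hD hX _ (pfM K X w (j' + 1 + 1) z), bd_lw K hX hw]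
      have h0 := congrArg (pwM K X w j') (hexp.symm.trans hz)
      rw [map_add, map_sub, pw_incl_del, pw_incl_link K hX, pw_lw] at h0
      simp only [map_zero, zero_add, zero_sub, neg_eq_zero] at h0
      exact h0
    obtain ⟨δ, hδ⟩ := hlink (pwM K X w (j' + 1) z) hcyc
    exact up_core K hX hw (j' + 1) hdel z hz δ hδ

/-- If `H̃ⱼ(X) = 0` and `H̃ⱼ(link) = 0` then `H̃ⱼ(del) = 0`. -/
lemma ZBS_del (hX : IsComplex X) {w : Fin n} (hw : ({w} : Finset (Fin n)) ∈ X) (j : ℕ)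
    (hXz : ZBS K X j) (hlink : ZBS K (link X {w}) j) : ZBS K (delV X w) j := by
  intro u hu
  have hD : IsComplex (delV X w) := delV_isComplex hX w
  have hz : boundaryMap K X j (inclM K (fun F (hF : F ∈ delV X w) => hF.1) (j + 1) u) = 0 := by
    rw [bd_incl K hD hX _ u, hu, map_zero]
  obtain ⟨β, hβ⟩ := hXz _ hz
  have hcyc : boundaryMap K (link X {w}) j (pwM K X w (j + 1) β) = 0 := by
    have hexp : boundaryMap K X (j + 1) β
        = inclM K (fun F (hF : F ∈ delV X w) => hF.1) (j + 1)
            (boundaryMap K (delV X w) (j + 1) (pfM K X w (j + 1 + 1) β))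
          + (inclM K (link_sub hX) (j + 1) (pwM K X w (j + 1) β)
            - lwM K X w j (boundaryMap K (link X {w}) j (pwM K X w (j + 1) β))) := by
      nth_rewrite 1 [decompM K (w := w) β]
      rw [map_add, bd_incl K hD hX _ (pfM K X w (j + 1 + 1) β), bd_lw K hX hw]
    have h0 := congrArg (pwM K X w j) (hexp.symm.trans hβ)
    rw [map_add, map_sub, pw_incl_del, pw_incl_link K hX, pw_lw, pw_incl_del] at h0
    simp only [zero_add, zero_sub, neg_eq_zero] at h0
    exact h0
  obtain ⟨δ, hδ⟩ := hlink (pwM K X w (j + 1) β) hcyc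
  set η := β + boundaryMap K X (j + 2) (lwM K X w (j + 2) δ) with hηdef
  have h1 : η = inclM K (fun F (hF : F ∈ delV X w) => hF.1) (j + 2) (pfM K X w (j + 2) β)
      + inclM K (link_sub hX) (j + 2) δ := by
    rw [hηdef, bd_lw K hX hw δ, hδ]
    nth_rewrite 1 [decompM K (w := w) β]
    abel
  have hpw : pwM K X w (j + 1) η = 0 := by
    rw [h1, map_add, pw_incl_del, pw_incl_link K hX, add_zero]
  have hη_incl : inclM K (fun F (hF : F ∈ delV X w) => hF.1) (j + 2)
      (pfM K X w (j + 2) η) = η := by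
    nth_rewrite 2 [decompM K (w := w) η]
    rw [hpw, map_zero, add_zero]
  have hbdη : boundaryMap K X (j + 1) η
      = inclM K (fun F (hF : F ∈ delV X w) => hF.1) (j + 1) u := by
    rw [hηdef, map_add, hβ, boundary_boundary K hX, add_zero]
  refine ⟨pfM K X w (j + 2) η, ?_⟩
  have h4 : inclM K (fun F (hF : F ∈ delV X w) => hF.1) (j + 1)
      (boundaryMap K (delV X w) (j + 1) (pfM K X w (j + 2) η))
      = inclM K (fun F (hF : F ∈ delV X w) => hF.1) (j + 1) u := by
    rw [← bd_incl K hD hX _ (pfM K X w (j + 2) η), hη_incl, hbdη]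
  have h5 := congrArg (pfM K X w (j + 1)) h4
  rwa [pf_incl, pf_incl] at h5

end ZB

section PureDim

variable (K : Type) [Field K] {n : ℕ}

lemma pure_card_le {Γ : Set (Finset (Fin n))} {e : ℕ} (hP : IsPure Γ e) :
    ∀ F ∈ Γ, F.card ≤ e := by
  intro F hF
  obtain ⟨G, _, hFG, hGc⟩ := hP.2 F hF
  exact hGc ▸ Finset.card_le_card hFG

lemma pure_link {Γ : Set (Finset (Fin n))} {e : ℕ} (hΓ : IsComplex Γ) (hP : IsPure Γ e)
    {F₀ : Finset (Fin n)} (hF₀ : F₀ ∈ Γ) : IsPure (link Γ F₀) (e - F₀.card) := by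
  constructor
  · obtain ⟨G, hG, hFG, hGc⟩ := hP.2 F₀ hF₀
    refine ⟨G \ F₀, ⟨Finset.disjoint_sdiff, ?_⟩, ?_⟩
    · rwa [Finset.union_sdiff_of_subset hFG]
    · rw [Finset.card_sdiff_of_subset hFG, hGc]
  · rintro H ⟨hdH, hFH⟩
    obtain ⟨G, hG, hFG, hGc⟩ := hP.2 (F₀ ∪ H) hFH
    refine ⟨G \ F₀, ⟨Finset.disjoint_sdiff, ?_⟩, ?_, ?_⟩
    · rwa [Finset.union_sdiff_of_subset (Finset.subset_union_left.trans hFG)]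
    · rw [Finset.subset_sdiff]
      exact ⟨Finset.subset_union_right.trans hFG, hdH.symm⟩
    · rw [Finset.card_sdiff_of_subset (Finset.subset_union_left.trans hFG), hGc]

lemma dimC_pure {Γ : Set (Finset (Fin n))} {e : ℕ} (hP : IsPure Γ e) :
    dimC Γ = (e : ℤ) - 1 := by
  obtain ⟨G, hG, hGc⟩ := hP.1
  apply le_antisymm
  · apply csSup_le
    · exact ⟨(G.card : ℤ) - 1, ⟨G, hG, rfl⟩⟩
    · rintro x ⟨F, hF, rfl⟩
      have := pure_card_le hP F hF
      show (F.card : ℤ) - 1 ≤ (e : ℤ) - 1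
      omega
  · apply le_csSup
    · refine ⟨(e : ℤ) - 1, ?_⟩
      rintro x ⟨F, hF, rfl⟩
      have := pure_card_le hP F hF
      show (F.card : ℤ) - 1 ≤ (e : ℤ) - 1
      omega
    · exact ⟨G, hG, by show ((G.card : ℤ) - 1) = (e : ℤ) - 1; rw [hGc]⟩

lemma cm_link {Γ : Set (Finset (Fin n))} {s : ℕ} {w : Fin n}
    (hw : ({w} : Finset (Fin n)) ∈ Γ)
    (hCM : ∀ F ∈ Γ, s ≤ F.card → IsCMComplex K (link Γ F)) :
    ∀ G ∈ link Γ {w}, s - 1 ≤ G.card → IsCMComplex K (link (link Γ {w}) G) := by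
  intro G hG hGc
  rw [link_link hG.1]
  refine hCM ({w} ∪ G) hG.2 ?_
  rw [Finset.card_union_of_disjoint hG.1, Finset.card_singleton]
  omega

end PureDim

section Simplex

variable (K : Type) [Field K] {n : ℕ}

/-- Acyclicity of the full simplex on a face `M` (restriction of a complex to `M`). -/
lemma simplex_ZL (p : ℕ) : ∀ (Γ : Set (Finset (Fin n))) (M : Finset (Fin n)),
    IsComplex Γ → M ∈ Γ → M.card = p → ∀ k, (M ≠ ∅ ∨ 1 ≤ k) → ZL K (resC Γ M) k := by
  induction p using Nat.strong_induction_on with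
  | _ p IH =>
    intro Γ M hΓ hM hp k hk
    have hres : IsComplex (resC Γ M) := resC_isComplex hΓ M
    cases k with
    | zero =>
      have hMne : M ≠ ∅ := hk.resolve_right (by omega)
      obtain ⟨v, hv⟩ := Finset.nonempty_iff_ne_empty.2 hMne
      exact ZB0_of_vertex K hres (v := v)
        ⟨hΓ.2 M hM {v} (Finset.singleton_subset_iff.2 hv), Finset.singleton_subset_iff.2 hv⟩
    | succ κ =>
      show ZBS K (resC Γ M) κ
      by_cases hM0 : M = ∅
      · refine ZBS_of_no_faces K (fun F => ?_)
        rintro ⟨⟨_, hFM⟩, hFc⟩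
        rw [hM0, Finset.subset_empty] at hFM
        rw [hFM] at hFc
        simp at hFc
      · obtain ⟨v, hv⟩ := Finset.nonempty_iff_ne_empty.2 hM0
        have hvmem : ({v} : Finset (Fin n)) ∈ Γ :=
          hΓ.2 M hM {v} (Finset.singleton_subset_iff.2 hv)
        by_cases hM1 : M.erase v = ∅
        · have hMv : M = {v} := by
            rw [← Finset.insert_erase hv, hM1]
            rfl
          cases κ with
          | zero =>
            refine ZBS_single_vertex K hres (v := v) ⟨hvmem, by rw [hMv]⟩ ?_
            intro F hF
            exact hMv ▸ hF.2
          | succ κ' =>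
            refine ZBS_of_no_faces K (fun F => ?_)
            rintro ⟨⟨_, hFM⟩, hFc⟩
            have h1 : F.card ≤ 1 := by
              have := Finset.card_le_card (hMv ▸ hFM)
              simpa using this
            omega
        · have hvres : ({v} : Finset (Fin n)) ∈ resC Γ M :=
            ⟨hvmem, Finset.singleton_subset_iff.2 hv⟩
          have hvM : 1 ≤ p := by
            have := Finset.card_pos.2 ⟨v, hv⟩
            omega
          have herasemem : M.erase v ∈ Γ := hΓ.2 M hM _ (Finset.erase_subset _ _)
          have herasecard : (M.erase v).card = p - 1 := by
            rw [Finset.card_erase_of_mem hv, hp]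
          refine ZL_up K hres hvres κ ?_ ?_
          · rw [delV_resC]
            exact IH (p - 1) (by omega) Γ (M.erase v) hΓ herasemem herasecard (κ + 1)
              (Or.inr (by omega))
          · rw [link_resC hv]
            have hlinkmem : M.erase v ∈ link Γ {v} :=
              ⟨Finset.disjoint_singleton_left.2 (Finset.notMem_erase v M),
                by rw [← Finset.insert_eq, Finset.insert_erase hv]; exact hM⟩
            exact IH (p - 1) (by omega) (link Γ {v}) (M.erase v) (link_isComplex hΓ hvmem)
              hlinkmem herasecard κ (Or.inl hM1)

end Simplex

section Conn

variable (K : Type) [Field K] {n : ℕ}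

/-- The total-coefficient functional on `1`-chains. -/
noncomputable def totM (X : Set (Finset (Fin n))) : Chains K X 1 →ₗ[K] K :=
  Finsupp.lsum K fun _ => LinearMap.id

lemma aug_eq_tot {X : Set (Finset (Fin n))} (hX : IsComplex X) (γ : Chains K X 1) :
    boundaryMap K X 0 γ = Finsupp.single ⟨∅, hX.1, Finset.card_empty⟩ (totM K X γ) := by
  induction γ using Finsupp.induction_linear with
  | zero => simp
  | add f g hf hg => rw [map_add, map_add, hf, hg, Finsupp.single_add]
  | single a c =>
    obtain ⟨v, hv⟩ := Finset.card_eq_one.1 a.2.2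
    have hveq : a = ⟨{v}, hv ▸ a.2.1, hv ▸ a.2.2⟩ := Subtype.ext hv
    rw [hveq, aug_single_vertex K hX (hv ▸ a.2.1)]
    congr 1
    rw [totM, Finsupp.lsum_single]
    rfl

lemma sgn_self_singleton (x : Fin n) : sgn K x ({x} : Finset (Fin n)) = 1 := by
  rw [sgn, Finset.filter_singleton, if_neg (lt_irrefl x), Finset.card_empty, pow_zero]

lemma vdiff_mem {Γ : Set (Finset (Fin n))} (hΓ : IsComplex Γ) (v x : Fin n)
    (hvx : ({v, x} : Finset (Fin n)) ∈ Γ) :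
    sgl K Γ 1 {v} - sgl K Γ 1 {x} ∈ LinearMap.range (boundaryMap K Γ 1) := by
  by_cases hne : v = x
  · rw [hne, sub_self]
    exact zero_mem _
  · have hvnx : v ∉ ({x} : Finset (Fin n)) := by simp [hne]
    have hcard : ({v, x} : Finset (Fin n)).card = 1 + 1 := by
      rw [Finset.card_pair hne]
    have hbd := boundaryMap_sgl K hΓ hvx hcard
    rw [Finset.sum_pair hne,
      sgl_congr K (show ({v,x} : Finset (Fin n)).erase v = {x} by
        rw [show ({v,x} : Finset (Fin n)) = insert v {x} from rfl, Finset.erase_insert hvnx]),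
      sgl_congr K (show ({v,x} : Finset (Fin n)).erase x = {v} by
        rw [show ({v,x} : Finset (Fin n)) = insert v {x} from rfl,
          Finset.erase_insert_of_ne hne, Finset.erase_singleton]
        rfl)] at hbd
    have h1 : sgn K v ({v,x} : Finset (Fin n)) = sgn K v ({x} : Finset (Fin n)) :=
      sgn_insert_self K hvnx
    rcases lt_or_gt_of_ne hne with hlt | hlt
    · have h2 : sgn K v ({x} : Finset (Fin n)) = 1 := by
        rw [sgn, Finset.filter_singleton, if_neg (asymm hlt), Finset.card_empty, pow_zero]
      have h3 : sgn K x ({v,x} : Finset (Fin n)) = -1 := by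
        rw [show ({v,x} : Finset (Fin n)) = insert v {x} from rfl,
          sgn_insert_of_lt K hvnx hlt, sgn_self_singleton]
      rw [h1, h2, h3, one_smul, neg_one_smul] at hbd
      refine ⟨-(sgl K Γ (1+1) {v,x}), ?_⟩
      rw [map_neg, hbd]
      abel
    · have h2 : sgn K v ({x} : Finset (Fin n)) = -1 := by
        rw [sgn, Finset.filter_singleton, if_pos hlt, Finset.card_singleton, pow_one]
      have h3 : sgn K x ({v,x} : Finset (Fin n)) = 1 := by
        rw [show ({v,x} : Finset (Fin n)) = insert v {x} from rfl,
          sgn_insert_of_not_lt K (asymm hlt), sgn_self_singleton]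
      rw [h1, h2, h3, one_smul, neg_one_smul] at hbd
      refine ⟨sgl K Γ (1+1) {v,x}, ?_⟩
      rw [hbd]
      abel

/-- In a pure complex on few vertices, the difference of two vertices is a boundary. -/
lemma vertex_diff_mem {Γ : Set (Finset (Fin n))} {e : ℕ} {U : Finset (Fin n)}
    (hΓ : IsComplex Γ) (hP : IsPure Γ e) (hU : ∀ F ∈ Γ, F ⊆ U) (hcard : U.card < 2 * e)
    (v x : Fin n) (hv : ({v} : Finset (Fin n)) ∈ Γ) (hx : ({x} : Finset (Fin n)) ∈ Γ) :
    sgl K Γ 1 {v} - sgl K Γ 1 {x} ∈ LinearMap.range (boundaryMap K Γ 1) := by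
  obtain ⟨Gv, hGv, hvGv, hGvc⟩ := hP.2 {v} hv
  obtain ⟨Gx, hGx, hxGx, hGxc⟩ := hP.2 {x} hx
  have hinter : (Gv ∩ Gx).Nonempty := by
    rw [← Finset.card_pos]
    have h1 := Finset.card_union_add_card_inter Gv Gx
    have h2 : (Gv ∪ Gx).card ≤ U.card :=
      Finset.card_le_card (Finset.union_subset (hU Gv hGv) (hU Gx hGx))
    omega
  obtain ⟨y, hy⟩ := hinter
  have hy1 : y ∈ Gv := (Finset.mem_inter.1 hy).1
  have hy2 : y ∈ Gx := (Finset.mem_inter.1 hy).2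
  have hvy : ({v, y} : Finset (Fin n)) ∈ Γ := hΓ.2 Gv hGv _ (by
    rw [Finset.insert_subset_iff]
    exact ⟨Finset.singleton_subset_iff.1 hvGv, Finset.singleton_subset_iff.2 hy1⟩)
  have hyx : ({y, x} : Finset (Fin n)) ∈ Γ := hΓ.2 Gx hGx _ (by
    rw [Finset.insert_subset_iff]
    exact ⟨hy2, hxGx⟩)
  have := Submodule.add_mem _ (vdiff_mem K hΓ v y hvy) (vdiff_mem K hΓ y x hyx)
  rwa [sub_add_sub_cancel] at this

/-- Connectivity: `H̃₀ = 0` for a pure complex whose vertices live in a small set. -/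
lemma conn_ZBS {Γ : Set (Finset (Fin n))} {e : ℕ} {U : Finset (Fin n)}
    (hΓ : IsComplex Γ) (hP : IsPure Γ e) (hU : ∀ F ∈ Γ, F ⊆ U)
    (hcard : U.card < 2 * e) : ZBS K Γ 0 := by
  intro γ hγ
  obtain ⟨M, hM, hMc⟩ := hP.1
  have he : 1 ≤ e := by omega
  obtain ⟨v₀, hv₀⟩ : M.Nonempty := Finset.card_pos.1 (by omega)
  have hv₀m : ({v₀} : Finset (Fin n)) ∈ Γ :=
    hΓ.2 M hM {v₀} (Finset.singleton_subset_iff.2 hv₀)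
  have htot : totM K Γ γ = 0 := by
    rw [aug_eq_tot K hΓ γ] at hγ
    exact Finsupp.single_eq_zero.1 hγ
  have hdecomp : γ = ∑ a ∈ γ.support, γ a • (sgl K Γ 1 a.1 - sgl K Γ 1 {v₀}) := by
    have h1 : ∑ a ∈ γ.support, γ a • (sgl K Γ 1 a.1 - sgl K Γ 1 {v₀})
        = (∑ a ∈ γ.support, γ a • sgl K Γ 1 a.1)
          - (∑ a ∈ γ.support, γ a) • sgl K Γ 1 {v₀} := by
      rw [Finset.sum_smul]
      rw [← Finset.sum_sub_distrib]
      exact Finset.sum_congr rfl fun a _ => smul_sub _ _ _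
    have h2 : ∑ a ∈ γ.support, γ a • sgl K Γ 1 a.1 = γ := by
      have : ∀ a ∈ γ.support, γ a • sgl K Γ 1 a.1 = Finsupp.single a (γ a) := fun a _ =>
        (single_eq_smul_sgl K).symm
      rw [Finset.sum_congr rfl this]
      exact Finsupp.sum_single γ
    have h3 : ∑ a ∈ γ.support, γ a = 0 := by
      rw [← htot, totM]
      rfl
    rw [h1, h2, h3, zero_smul, sub_zero]
  rw [hdecomp]
  refine Submodule.sum_mem _ fun a _ => Submodule.smul_mem _ _ ?_
  obtain ⟨v, hveq⟩ := Finset.card_eq_one.1 a.2.2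
  rw [hveq]
  exact vertex_diff_mem K hΓ hP hU hcard v v₀ (hveq ▸ a.2.1) hv₀m

end Conn

section Master

variable (K : Type) [Field K] {n : ℕ}

lemma erase_sdiff_erase {U S' : Finset (Fin n)} {w : Fin n} (hwS : w ∈ S') :
    (U.erase w) \ (S'.erase w) = U \ S' := by
  ext x
  simp only [Finset.mem_sdiff, Finset.mem_erase, not_and]
  constructor
  · rintro ⟨⟨hxw, hxU⟩, h2⟩
    exact ⟨hxU, h2 hxw⟩
  · rintro ⟨hxU, hxS⟩
    have hxw : x ≠ w := fun h => hxS (h ▸ hwS)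
    exact ⟨⟨hxw, hxU⟩, fun _ => hxS⟩

/-- The master induction: vanishing of reduced homology of deletions of `CM_s` complexes. -/
lemma masterC : ∀ (s m e : ℕ) (Γ : Set (Finset (Fin n))) (U : Finset (Fin n)),
    IsComplex Γ → IsPure Γ e → (∀ F ∈ Γ, F ⊆ U) →
    (∀ F ∈ Γ, s ≤ F.card → IsCMComplex K (link Γ F)) →
    ∀ S : Finset (Fin n), (U \ S).card = m →
    ∀ i : ℤ, (s = 0 → i < (e : ℤ) - m - 1) →
    (1 ≤ s → i < min (2 * (e : ℤ) - U.card - s + 1) ((e : ℤ) - m - 1)) →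
    ReducedHomologyZero K (resC Γ S) i := by
  intro s
  induction s using Nat.strong_induction_on with
  | _ s IHs =>
  intro m
  induction m using Nat.strong_induction_on with
  | _ m IHm =>
  intro e Γ U hΓ hP hU hCM S hSm i h0 h1
  rcases le_or_gt i (-2) with hile | hige
  · exact RHZ_of_le_neg2 K hile
  have hi1 : (-1 : ℤ) ≤ i := by omega
  have hresC : IsComplex (resC Γ S) := resC_isComplex hΓ S
  have hbound : i < (e : ℤ) - m - 1 := by
    rcases Nat.eq_zero_or_pos s with hs0 | hs1
    · exact h0 hs0
    · exact lt_of_lt_of_le (h1 hs1) (min_le_right _ _)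
  rcases eq_or_lt_of_le hi1 with him1 | hipos
  · -- i = -1 : a vertex survives
    obtain ⟨M, hM, hMc⟩ := hP.1
    have hme : m < e := by omega
    have hnot : ¬ (M ⊆ U \ S) := fun hsub => by
      have := Finset.card_le_card hsub
      omega
    obtain ⟨v, hvM, hvnot⟩ := Finset.not_subset.1 hnot
    have hvU : v ∈ U := hU M hM hvM
    have hvS : v ∈ S := by
      by_contra hvS
      exact hvnot (Finset.mem_sdiff.2 ⟨hvU, hvS⟩)
    rw [← him1, RHZ_neg_one_iff]
    exact ZB0_of_vertex K hresC (v := v)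
      ⟨hΓ.2 M hM {v} (Finset.singleton_subset_iff.2 hvM), Finset.singleton_subset_iff.2 hvS⟩
  -- i ≥ 0
  have hi0 : (0 : ℤ) ≤ i := by omega
  rw [RHZ_nonneg_iff K hi0]
  rcases Nat.eq_zero_or_pos m with hm0 | hmpos
  · -- no deletions : `resC Γ S = Γ`
    have hUS : U ⊆ S := by
      rw [← Finset.sdiff_eq_empty_iff_subset, ← Finset.card_eq_zero, hSm, hm0]
    rw [resC_self hU hUS]
    rcases Nat.eq_zero_or_pos s with hs0 | hs1
    · -- Reisner's criterion
      have hCMc : IsCMComplex K Γ := by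
        have h := hCM ∅ hΓ.1 (by simp [hs0])
        rwa [link_empty] at h
      have hR := hCMc.2 ∅ hΓ.1 i (by rw [link_empty, dimC_pure hP]; omega)
      rw [link_empty] at hR
      exact (RHZ_nonneg_iff K hi0).1 hR
    · rcases eq_or_lt_of_le hi0 with hieq0 | hipos1
      · -- i = 0 : connectivity
        obtain ⟨hB1, hB2⟩ := lt_min_iff.1 (h1 hs1)
        have hUcard : U.card < 2 * e := by omega
        rw [show i.toNat = 0 by omega]
        exact conn_ZBS K hΓ hP hU hUcard
      · -- 1 ≤ i : deletion chain onto a fixed facet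
        obtain ⟨M, hM, hMc⟩ := hP.1
        have hMU : M ⊆ U := hU M hM
        obtain ⟨hB1, hB2⟩ := lt_min_iff.1 (h1 hs1)
        have key : ∀ (q : ℕ) (S' : Finset (Fin n)), S'.card = q → M ⊆ S' → S' ⊆ U →
            ZBS K (resC Γ S') i.toNat := by
          intro q
          induction q using Nat.strong_induction_on with
          | _ q IHq =>
          intro S' hq hMS' hS'U
          by_cases hSM : S' = M
          · rw [hSM]
            exact simplex_ZL K M.card Γ M hΓ hM rfl (i.toNat + 1) (Or.inr (by omega))
          · have hss : M ⊂ S' := Finset.ssubset_iff_subset_ne.2 ⟨hMS', Ne.symm hSM⟩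
            obtain ⟨w, hwS', hwM⟩ := Finset.exists_of_ssubset hss
            have hcardlt : e < S'.card := by
              rw [← hMc]
              exact Finset.card_lt_card hss
            have hq1 : 1 ≤ q := by omega
            have herS'c : (S'.erase w).card = q - 1 := by
              rw [Finset.card_erase_of_mem hwS', hq]
            have herS'M : M ⊆ S'.erase w := Finset.subset_erase.2 ⟨hMS', hwM⟩
            have herS'U : S'.erase w ⊆ U := (Finset.erase_subset _ _).trans hS'U
            by_cases hwv : ({w} : Finset (Fin n)) ∈ Γ
            · have hwres : ({w} : Finset (Fin n)) ∈ resC Γ S' :=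
                ⟨hwv, Finset.singleton_subset_iff.2 hwS'⟩
              refine ZL_up K (resC_isComplex hΓ S') hwres i.toNat ?_ ?_
              · rw [delV_resC]
                exact IHq (q - 1) (by omega) (S'.erase w) herS'c herS'M herS'U
              · rw [link_resC hwS']
                have he1 : 1 ≤ e := by
                  have := pure_card_le hP {w} hwv
                  simpa using this
                have hPl : IsPure (link Γ {w}) (e - 1) := by
                  have := pure_link hΓ hP hwv
                  rwa [Finset.card_singleton] at this
                have hdefc : ((U.erase w) \ (S'.erase w)).card = U.card - S'.card := by
                  rw [erase_sdiff_erase hwS', Finset.card_sdiff_of_subset hS'U]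
                have hUec : (U.erase w).card = U.card - 1 :=
                  Finset.card_erase_of_mem (hS'U hwS')
                have hS'Uc : S'.card ≤ U.card := Finset.card_le_card hS'U
                have happly := IHs (s - 1) (by omega) (((U.erase w) \ (S'.erase w)).card)
                  (e - 1) (link Γ {w}) (U.erase w)
                  (link_isComplex hΓ hwv) hPl
                  (fun G hG => Finset.subset_erase.2
                    ⟨hU G (link_sub hΓ G hG), Finset.disjoint_singleton_left.1 hG.1⟩)
                  (cm_link K hwv hCM)
                  (S'.erase w) rfl (i - 1)
                  (by intro _; rw [hdefc]; omega)
                  (by intro _; have hU1 : 1 ≤ U.card := Finset.card_pos.2 ⟨w, hS'U hwS'⟩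
                      rw [lt_min_iff, hdefc, hUec]; omega)
                rw [RHZ_nonneg_iff K (by omega : (0:ℤ) ≤ i - 1)] at happly
                have hnat : i.toNat = (i - 1).toNat + 1 := by omega
                rw [hnat]
                exact happly
            · rw [resC_erase_nonvertex hΓ hwv S']
              exact IHq (q - 1) (by omega) (S'.erase w) herS'c herS'M herS'U
        have hfin := key U.card U rfl hMU (subset_refl U)
        rwa [resC_self hU (subset_refl U)] at hfin
  · -- m ≥ 1 : peel one deleted vertex
    have hne : (U \ S).Nonempty := by
      rw [← Finset.card_pos, hSm]
      omega
    obtain ⟨w, hw⟩ := hne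
    have hwU : w ∈ U := (Finset.mem_sdiff.1 hw).1
    have hwS : w ∉ S := (Finset.mem_sdiff.1 hw).2
    have hcard' : (U \ insert w S).card = m - 1 := by
      rw [Finset.sdiff_insert, Finset.card_erase_of_mem hw, hSm]
    by_cases hwv : ({w} : Finset (Fin n)) ∈ Γ
    · have hSeq : resC Γ S = delV (resC Γ (insert w S)) w := by
        rw [delV_resC, Finset.erase_insert hwS]
      rw [hSeq]
      have hwres : ({w} : Finset (Fin n)) ∈ resC Γ (insert w S) :=
        ⟨hwv, Finset.singleton_subset_iff.2 (Finset.mem_insert_self w S)⟩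
      have he1 : 1 ≤ e := by
        have := pure_card_le hP {w} hwv
        simpa using this
      have hPl : IsPure (link Γ {w}) (e - 1) := by
        have := pure_link hΓ hP hwv
        rwa [Finset.card_singleton] at this
      have hUec : (U.erase w).card = U.card - 1 := Finset.card_erase_of_mem hwU
      have hdefc : ((U.erase w) \ S).card = m - 1 := by
        rw [Finset.erase_sdiff_comm, Finset.card_erase_of_mem hw, hSm]
      refine ZBS_del K (resC_isComplex hΓ _) hwres i.toNat ?_ ?_
      · have := IHm (m - 1) (by omega) e Γ U hΓ hP hU hCM (insert w S) hcard' i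
          (by intro hs0; have := h0 hs0; omega)
          (by intro hs1; obtain ⟨hx1, hx2⟩ := lt_min_iff.1 (h1 hs1); rw [lt_min_iff]; exact ⟨by omega, by omega⟩)
        rwa [RHZ_nonneg_iff K hi0] at this
      · rw [link_resC (Finset.mem_insert_self w S), Finset.erase_insert hwS]
        rcases Nat.eq_zero_or_pos s with hs0 | hs1
        · have := IHm (m - 1) (by omega) (e - 1) (link Γ {w}) (U.erase w)
            (link_isComplex hΓ hwv) hPl
            (fun G hG => Finset.subset_erase.2
              ⟨hU G (link_sub hΓ G hG), Finset.disjoint_singleton_left.1 hG.1⟩)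
            (by subst hs0; exact cm_link K hwv hCM)
            S hdefc i
            (by intro _; have := h0 hs0; omega)
            (by intro h; omega)
          rwa [RHZ_nonneg_iff K hi0] at this
        · obtain ⟨hB1, hB2⟩ := lt_min_iff.1 (h1 hs1)
          have := IHs (s - 1) (by omega) (m - 1) (e - 1) (link Γ {w}) (U.erase w)
            (link_isComplex hΓ hwv) hPl
            (fun G hG => Finset.subset_erase.2
              ⟨hU G (link_sub hΓ G hG), Finset.disjoint_singleton_left.1 hG.1⟩)
            (cm_link K hwv hCM)
            S hdefc i
            (by intro hs10; omega)
            (by intro hs11; have hU1 : 1 ≤ U.card := Finset.card_pos.2 ⟨w, hwU⟩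
                rw [lt_min_iff, hUec]; omega)
          rwa [RHZ_nonneg_iff K hi0] at this
    · have heq : resC Γ (insert w S) = resC Γ S := by
        rw [resC_erase_nonvertex hΓ hwv (insert w S), Finset.erase_insert hwS]
      rw [← heq]
      have := IHm (m - 1) (by omega) e Γ U hΓ hP hU hCM (insert w S) hcard' i
        (by intro hs0; have := h0 hs0; omega)
        (by intro hs1; obtain ⟨hx1, hx2⟩ := lt_min_iff.1 (h1 hs1); rw [lt_min_iff]; exact ⟨by omega, by omega⟩)
      rwa [RHZ_nonneg_iff K hi0] at this

end Master
/-- If `Δ` is a `(d-1)`-dimensional `CM_t` simplicial complex on `n` vertices, then `Δ`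
satisfies Serre's condition `S_{2d-n-t+2}`. -/
theorem CMt_implies_Serre (K : Type) [Field K] {n d t : ℕ}
    (Δ : Set (Finset (Fin n))) (hvert : ∀ v : Fin n, ({v} : Finset (Fin n)) ∈ Δ)
    (hCM : IsCMt K Δ d t) :
    SerreS K Δ (2 * (d : ℤ) - n - t + 2) := by
  obtain ⟨hΔ, hP, hlinks⟩ := hCM
  intro F hF i hi
  rw [lt_min_iff] at hi
  obtain ⟨hi1, hi2⟩ := hi
  by_cases hft : t ≤ F.card
  · have hCMl := hlinks F hF hft
    have h := hCMl.2 ∅ (link_isComplex hΔ hF).1 i (by rw [link_empty]; exact hi2)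
    rwa [link_empty] at h
  · push_neg at hft
    have hfd : F.card ≤ d := pure_card_le hP F hF
    have hfn : F.card ≤ n := by
      have := Finset.card_le_card (Finset.subset_univ F)
      rwa [Finset.card_univ, Fintype.card_fin] at this
    have hdim : dimC (link Δ F) = ((d - F.card : ℕ) : ℤ) - 1 :=
      dimC_pure (pure_link hΔ hP hF)
    rw [hdim] at hi2
    have hcompl : (Fᶜ : Finset (Fin n)).card = n - F.card := by
      rw [Finset.card_compl, Fintype.card_fin]
    have hfaces : ∀ G ∈ link Δ F, G ⊆ (Fᶜ : Finset (Fin n)) := by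
      intro G hG x hx
      exact Finset.mem_compl.2 (Finset.disjoint_right.1 hG.1 hx)
    have hcm : ∀ G ∈ link Δ F, t - F.card ≤ G.card →
        IsCMComplex K (link (link Δ F) G) := by
      intro G hG hGc
      rw [link_link hG.1]
      refine hlinks (F ∪ G) hG.2 ?_
      rw [Finset.card_union_of_disjoint hG.1]
      omega
    have happ := masterC K (t - F.card) 0 (d - F.card) (link Δ F)
      (Fᶜ : Finset (Fin n)) (link_isComplex hΔ hF) (pure_link hΔ hP hF) hfaces hcm
      Finset.univ (by simp) i
      (by intro h; omega)
      (by intro h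
          rw [lt_min_iff, hcompl]
          constructor
          · omega
          · omega)
    rwa [resC_self hfaces (Finset.subset_univ _)] at happ
end

section
/- Let Δ be a (d-1)-dimensional Buchsbaum simplicial complex on n vertices such that H̃_i(Δ; K) ≠ 0 for some i ≥ 1. Then n ≥ 2d - i. -/
open Finset

/-! ## Simplicial (reduced, augmented) chain complex and reduced homology -/

variable (K : Type) [Field K]

namespace BHVB

variable {K : Type} [Field K] {n : ℕ}

abbrev UC (K : Type) [Field K] (n k : ℕ) : Type := {F : Finset (Fin n) // F.card = k} →₀ K

/-- single generator, with card side condition handled by dite -/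
noncomputable def sgl (k : ℕ) (G : Finset (Fin n)) : UC K n k :=
  if h : G.card = k then Finsupp.single ⟨G, h⟩ 1 else 0

noncomputable def sgn (K : Type) [Field K] {n : ℕ} (F : Finset (Fin n)) (v : Fin n) : K :=
  (-1) ^ (F.filter (fun w => w < v)).card

lemma sgn_mul_self (F : Finset (Fin n)) (v : Fin n) : sgn K F v * sgn K F v = 1 := by
  simp [sgn, ← pow_add, ← two_mul, pow_mul]

noncomputable def Dmap (K : Type) [Field K] (n : ℕ) (k : ℕ) : UC K n (k+1) →ₗ[K] UC K n k :=
  Finsupp.lsum K fun F => LinearMap.toSpanSingleton K _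
    (∑ v ∈ F.1, sgn K F.1 v • sgl k (F.1.erase v))

noncomputable def coneV (K : Type) [Field K] {n : ℕ} (v : Fin n) (k : ℕ) :
    UC K n k →ₗ[K] UC K n (k+1) :=
  Finsupp.lsum K fun G => LinearMap.toSpanSingleton K _
    (if v ∈ G.1 then 0 else sgn K G.1 v • sgl (k+1) (insert v G.1))

noncomputable def unconeV (K : Type) [Field K] {n : ℕ} (v : Fin n) (k : ℕ) :
    UC K n (k+1) →ₗ[K] UC K n k :=
  Finsupp.lsum K fun F => LinearMap.toSpanSingleton K _
    (if v ∈ F.1 then sgn K F.1 v • sgl k (F.1.erase v) else 0)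

lemma Dmap_single (F : {F : Finset (Fin n) // F.card = k+1}) :
    Dmap K n k (Finsupp.single F 1) = ∑ v ∈ F.1, sgn K F.1 v • sgl k (F.1.erase v) := by
  simp [Dmap]

lemma coneV_single (v : Fin n) (G : {F : Finset (Fin n) // F.card = k}) :
    coneV K v k (Finsupp.single G 1) =
      if v ∈ G.1 then 0 else sgn K G.1 v • sgl (k+1) (insert v G.1) := by
  simp [coneV]

lemma unconeV_single (v : Fin n) (F : {F : Finset (Fin n) // F.card = k+1}) :
    unconeV K v k (Finsupp.single F 1) =
      if v ∈ F.1 then sgn K F.1 v • sgl k (F.1.erase v) else 0 := by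
  simp [unconeV]

lemma sgl_card (k : ℕ) (G : Finset (Fin n)) (h : G.card = k) :
    (sgl (K := K) k G) = Finsupp.single ⟨G, h⟩ 1 := by simp [sgl, h]

lemma sgl_ne (k : ℕ) (G : Finset (Fin n)) (h : G.card ≠ k) : (sgl (K := K) k G) = 0 := by
  simp [sgl, h]

/-- extension principle: a linear identity that holds on singles with property P holds on
chains supported on P. -/
lemma ext_on_spt {M : Type} [AddCommGroup M] [Module K M] {k : ℕ}
    (L R : UC K n k →ₗ[K] M) (P : Finset (Fin n) → Prop)
    (h : ∀ F : {F : Finset (Fin n) // F.card = k}, P F.1 →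
      L (Finsupp.single F 1) = R (Finsupp.single F 1))
    (z : UC K n k) (hz : ∀ F, z F ≠ 0 → P F.1) : L z = R z := by
  have hz' : z = z.sum (fun F a => a • Finsupp.single F (1:K)) := by
    conv_lhs => rw [← Finsupp.sum_single z]
    exact Finsupp.sum_congr (fun F hF => by rw [Finsupp.smul_single, smul_eq_mul, mul_one])
  rw [hz', map_finsuppSum, map_finsuppSum]
  refine Finset.sum_congr rfl fun F hF => ?_
  simp only []
  rw [map_smul, map_smul, h F (hz F (Finsupp.mem_support_iff.mp hF))]


/-! ### sign lemmas -/

lemma sgn_insert_self (F : Finset (Fin n)) (v : Fin n) :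
    sgn K (insert v F) v = sgn K F v := by
  simp [sgn, Finset.filter_insert]

lemma sgn_erase_self (F : Finset (Fin n)) (v : Fin n) :
    sgn K (F.erase v) v = sgn K F v := by
  have : (F.filter (fun w => w < v)).erase v = F.filter (fun w => w < v) :=
    Finset.erase_eq_of_notMem (by simp)
  simp [sgn, Finset.filter_erase, this]

lemma sgn_insert_other {F : Finset (Fin n)} {v w : Fin n} (hv : v ∉ F) (hw : w ∈ F) :
    sgn K (insert v F) w = (if v < w then -1 else 1) * sgn K F w := by
  by_cases h : v < w
  · have : v ∉ F.filter (fun u => u < w) := fun hc => hv (Finset.mem_filter.mp hc).1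
    simp [sgn, Finset.filter_insert, h, Finset.card_insert_of_notMem this, pow_succ]
  · simp [sgn, Finset.filter_insert, h]

lemma sgn_erase_other {F : Finset (Fin n)} {v w : Fin n} (hw : w ∈ F) :
    sgn K (F.erase w) v = (if w < v then -1 else 1) * sgn K F v := by
  by_cases h : w < v
  · have hmem : w ∈ F.filter (fun u => u < v) := Finset.mem_filter.mpr ⟨hw, h⟩
    have hpos : 0 < (F.filter (fun u => u < v)).card := Finset.card_pos.mpr ⟨w, hmem⟩
    obtain ⟨m, hm⟩ : ∃ m, (F.filter (fun u => u < v)).card = m + 1 :=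
      ⟨_, (Nat.succ_pred_eq_of_pos hpos).symm⟩
    simp [sgn, Finset.filter_erase, Finset.card_erase_of_mem hmem, hm, h, pow_succ]
  · have : (F.filter (fun u => u < v)).erase w = F.filter (fun u => u < v) :=
      Finset.erase_eq_of_notMem (fun hc => h (Finset.mem_filter.mp hc).2)
    simp [sgn, Finset.filter_erase, this, h]

/-! ### sgl-level lemmas for the operators -/

lemma coneV_sgl (v : Fin n) (l : ℕ) (G : Finset (Fin n)) :
    coneV K v l (sgl l G) =
      if v ∈ G then 0 else sgn K G v • sgl (l+1) (insert v G) := by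
  by_cases h : G.card = l
  · rw [sgl_card l G h, coneV_single]
  · rw [sgl_ne l G h, map_zero]
    by_cases hv : v ∈ G
    · simp [hv]
    · rw [if_neg hv, sgl_ne (l+1) _ (by intro hc; rw [Finset.card_insert_of_notMem hv] at hc; omega),
        smul_zero]

lemma unconeV_sgl (v : Fin n) (l : ℕ) (F : Finset (Fin n)) :
    unconeV K v l (sgl (l+1) F) =
      if v ∈ F then sgn K F v • sgl l (F.erase v) else 0 := by
  by_cases h : F.card = l + 1
  · rw [sgl_card (l+1) F h, unconeV_single]
  · rw [sgl_ne (l+1) F h, map_zero]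
    by_cases hv : v ∈ F
    · rw [if_pos hv, sgl_ne l _ (by have := Finset.card_pos.mpr ⟨v, hv⟩; rw [Finset.card_erase_of_mem hv]; omega), smul_zero]
    · simp [hv]

lemma Dmap_sgl (l : ℕ) (F : Finset (Fin n)) (h : F.card = l + 1) :
    Dmap K n l (sgl (l+1) F) = ∑ v ∈ F, sgn K F v • sgl l (F.erase v) := by
  rw [sgl_card (l+1) F h, Dmap_single]

/-! ### the four key identities, on singles -/

lemma CU_single (v : Fin n) (l : ℕ) (F : {F : Finset (Fin n) // F.card = l+1})
    (hv : v ∈ F.1) :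
    coneV K v l (unconeV K v l (Finsupp.single F 1)) = Finsupp.single F 1 := by
  rw [unconeV_single, if_pos hv, map_smul, coneV_sgl, if_neg (Finset.notMem_erase v F.1),
    sgn_erase_self, Finset.insert_erase hv, smul_smul, sgn_mul_self,
    one_smul, sgl_card _ _ F.2]

lemma UC_single (v : Fin n) (l : ℕ) (G : {F : Finset (Fin n) // F.card = l})
    (hv : v ∉ G.1) :
    unconeV K v l (coneV K v l (Finsupp.single G 1)) = Finsupp.single G 1 := by
  rw [coneV_single, if_neg hv, map_smul, unconeV_sgl, if_pos (Finset.mem_insert_self v G.1),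
    sgn_insert_self, Finset.erase_insert hv, smul_smul, sgn_mul_self,
    one_smul, sgl_card _ _ G.2]

lemma KI2_single (v : Fin n) (l : ℕ) (F : {F : Finset (Fin n) // F.card = l+1})
    (hv : v ∈ F.1) :
    coneV K v l (Dmap K n l (Finsupp.single F 1)) = Finsupp.single F 1 := by
  rw [Dmap_single, map_sum]
  rw [Finset.sum_eq_single v]
  · rw [map_smul, coneV_sgl, if_neg (Finset.notMem_erase v F.1), sgn_erase_self,
      Finset.insert_erase hv, smul_smul, sgn_mul_self, one_smul, sgl_card _ _ F.2]
  · intro w hw hne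
    rw [map_smul, coneV_sgl, if_pos (Finset.mem_erase.mpr ⟨Ne.symm hne, hv⟩), smul_zero]
  · intro h; exact absurd hv h

lemma KI_single (v : Fin n) (l : ℕ) (F : {F : Finset (Fin n) // F.card = l+1})
    (hv : v ∉ F.1) :
    Dmap K n (l+1) (coneV K v (l+1) (Finsupp.single F 1)) =
      Finsupp.single F 1 - coneV K v l (Dmap K n l (Finsupp.single F 1)) := by
  rw [coneV_single, if_neg hv, map_smul, Dmap_sgl (l+1) _
      (by rw [Finset.card_insert_of_notMem hv, F.2]),
    Finset.sum_insert hv, Finset.erase_insert hv, sgn_insert_self, sgl_card _ _ F.2,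
    Dmap_single, map_sum]
  rw [smul_add, smul_smul, sgn_mul_self, one_smul, sub_eq_add_neg]
  congr 1
  rw [Finset.smul_sum, ← Finset.sum_neg_distrib]
  refine Finset.sum_congr rfl fun w hw => ?_
  have hne : w ≠ v := fun h => hv (h ▸ hw)
  rw [map_smul, coneV_sgl, if_neg (fun hc => hv (Finset.mem_of_mem_erase hc)),
    Finset.erase_insert_of_ne hne.symm, smul_smul, smul_smul, ← neg_smul]
  congr 1
  rw [sgn_insert_other hv hw, sgn_erase_other hw]
  rcases lt_or_gt_of_ne hne with h | h
  · rw [if_neg (asymm h), if_pos h]; ring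
  · rw [if_pos h, if_neg (asymm h)]; ring


/-! ### support predicate -/

def spt (Γ : Set (Finset (Fin n))) {k : ℕ} (z : UC K n k) : Prop :=
  ∀ F : {F : Finset (Fin n) // F.card = k}, z F ≠ 0 → F.1 ∈ Γ

lemma spt_zero {Γ : Set (Finset (Fin n))} {k : ℕ} : spt Γ (0 : UC K n k) :=
  fun F h => absurd rfl h

lemma spt_add {Γ : Set (Finset (Fin n))} {k : ℕ} {x y : UC K n k}
    (hx : spt Γ x) (hy : spt Γ y) : spt Γ (x + y) := by
  intro F h
  rw [Finsupp.add_apply] at h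
  by_cases h1 : x F = 0
  · exact hy F (by rw [h1, zero_add] at h; exact h)
  · exact hx F h1

lemma spt_neg {Γ : Set (Finset (Fin n))} {k : ℕ} {x : UC K n k}
    (hx : spt Γ x) : spt Γ (-x) := by
  intro F h; rw [Finsupp.neg_apply, neg_ne_zero] at h; exact hx F h

lemma spt_sub {Γ : Set (Finset (Fin n))} {k : ℕ} {x y : UC K n k}
    (hx : spt Γ x) (hy : spt Γ y) : spt Γ (x - y) := by
  rw [sub_eq_add_neg]; exact spt_add hx (spt_neg hy)

lemma spt_smul {Γ : Set (Finset (Fin n))} {k : ℕ} {x : UC K n k} (c : K)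
    (hx : spt Γ x) : spt Γ (c • x) := by
  intro F h; rw [Finsupp.smul_apply] at h
  exact hx F (right_ne_zero_of_mul (by simpa using h))

lemma spt_sum {Γ : Set (Finset (Fin n))} {k : ℕ} {ι : Type*} {s : Finset ι}
    {f : ι → UC K n k} (h : ∀ i ∈ s, spt Γ (f i)) : spt Γ (∑ i ∈ s, f i) := by
  classical
  induction s using Finset.induction_on with
  | empty => simpa using (spt_zero (K := K))
  | insert a s' hmem ih =>
    rw [Finset.sum_insert hmem]
    exact spt_add (h a (Finset.mem_insert_self a s'))
      (ih fun i hi => h i (Finset.mem_insert_of_mem hi))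

lemma spt_mono {Γ Γ' : Set (Finset (Fin n))} {k : ℕ} {x : UC K n k}
    (hΓ : Γ ⊆ Γ') (hx : spt Γ x) : spt Γ' x := fun F h => hΓ (hx F h)

lemma spt_single {Γ : Set (Finset (Fin n))} {k : ℕ} {F : {F : Finset (Fin n) // F.card = k}}
    (hF : F.1 ∈ Γ) (a : K) : spt Γ (Finsupp.single F a) := by
  intro G h
  rw [Finsupp.single_apply] at h
  by_cases hFG : F = G
  · exact hFG ▸ hF
  · rw [if_neg hFG] at h; exact absurd rfl h

lemma spt_sgl {Γ : Set (Finset (Fin n))} {k : ℕ} {G : Finset (Fin n)}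
    (hG : G ∈ Γ) : spt Γ (sgl (K := K) k G) := by
  unfold sgl
  split
  · exact spt_single hG 1
  · exact spt_zero

lemma spt_map {Γ Γ' : Set (Finset (Fin n))} {k l : ℕ} (L : UC K n k →ₗ[K] UC K n l)
    (h : ∀ F : {F : Finset (Fin n) // F.card = k}, F.1 ∈ Γ →
      spt Γ' (L (Finsupp.single F 1)))
    {z : UC K n k} (hz : spt Γ z) : spt Γ' (L z) := by
  have hz' : z = z.sum (fun F a => a • Finsupp.single F (1:K)) := by
    conv_lhs => rw [← Finsupp.sum_single z]
    exact Finsupp.sum_congr (fun F hF => by rw [Finsupp.smul_single, smul_eq_mul, mul_one])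
  rw [hz', map_finsuppSum]
  refine spt_sum fun F hF => ?_
  simp only []
  rw [map_smul]
  exact spt_smul _ (h F (hz F (Finsupp.mem_support_iff.mp hF)))

lemma spt_filter {Γ : Set (Finset (Fin n))} {k : ℕ} (p : {F : Finset (Fin n) // F.card = k} → Prop)
    [DecidablePred p] {z : UC K n k} (hz : spt Γ z) : spt Γ (z.filter p) := by
  intro F h
  rw [Finsupp.filter_apply] at h
  split at h
  · exact hz F h
  · exact absurd rfl h

lemma spt_filter_prop {k : ℕ} (p : Finset (Fin n) → Prop)
    [DecidablePred p] (z : UC K n k) : spt {G | p G} (z.filter (fun F => p F.1)) := by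
  intro F h
  rw [Finsupp.filter_apply] at h
  split at h
  · assumption
  · exact absurd rfl h

lemma spt_eq_zero {P Q : Set (Finset (Fin n))} {k : ℕ} {z : UC K n k}
    (hP : spt P z) (hQ : spt Q z) (h : ∀ F, F ∈ P → F ∉ Q) : z = 0 := by
  ext F
  by_contra hc
  exact h F.1 (hP F hc) (hQ F hc)

lemma spt_coneV {Γ Γ' : Set (Finset (Fin n))} {k : ℕ} (v : Fin n)
    (h : ∀ G ∈ Γ, v ∉ G → insert v G ∈ Γ') {z : UC K n k} (hz : spt Γ z) :
    spt Γ' (coneV K v k z) := by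
  refine spt_map _ (fun F hF => ?_) hz
  rw [coneV_single]
  split
  · exact spt_zero
  · exact spt_smul _ (spt_sgl (h F.1 hF (by assumption)))

lemma spt_coneV_mem {k : ℕ} (v : Fin n) (z : UC K n k) :
    spt {G | v ∈ G} (coneV K v k z) := by
  refine spt_map (Γ := Set.univ) _ (fun F _ => ?_) (fun F _ => Set.mem_univ _)
  rw [coneV_single]
  split
  · exact spt_zero
  · exact spt_smul _ (spt_sgl (Finset.mem_insert_self v F.1))

lemma spt_unconeV {Γ Γ' : Set (Finset (Fin n))} {k : ℕ} (v : Fin n)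
    (h : ∀ F ∈ Γ, v ∈ F → F.erase v ∈ Γ') {z : UC K n (k+1)} (hz : spt Γ z) :
    spt Γ' (unconeV K v k z) := by
  refine spt_map _ (fun F hF => ?_) hz
  rw [unconeV_single]
  split
  · exact spt_smul _ (spt_sgl (h F.1 hF (by assumption)))
  · exact spt_zero

/-! ### extended identities -/

lemma CU_ext {k : ℕ} (v : Fin n) {z : UC K n (k+1)} (hz : spt {G | v ∈ G} z) :
    coneV K v k (unconeV K v k z) = z := by
  have := ext_on_spt ((coneV K v k).comp (unconeV K v k)) (LinearMap.id) (fun G => v ∈ G)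
    (fun F hF => by simpa using CU_single v k F hF) z hz
  simpa using this

lemma UC_ext {k : ℕ} (v : Fin n) {z : UC K n k} (hz : spt {G | v ∉ G} z) :
    unconeV K v k (coneV K v k z) = z := by
  have := ext_on_spt ((unconeV K v k).comp (coneV K v k)) (LinearMap.id) (fun G => v ∉ G)
    (fun F hF => by simpa using UC_single v k F hF) z hz
  simpa using this

lemma KI2_ext {k : ℕ} (v : Fin n) {z : UC K n (k+1)} (hz : spt {G | v ∈ G} z) :
    coneV K v k (Dmap K n k z) = z := by
  have := ext_on_spt ((coneV K v k).comp (Dmap K n k)) (LinearMap.id) (fun G => v ∈ G)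
    (fun F hF => by simpa using KI2_single v k F hF) z hz
  simpa using this

lemma KI_ext {k : ℕ} (v : Fin n) {z : UC K n (k+1)} (hz : spt {G | v ∉ G} z) :
    Dmap K n (k+1) (coneV K v (k+1) z) = z - coneV K v k (Dmap K n k z) := by
  have := ext_on_spt ((Dmap K n (k+1)).comp (coneV K v (k+1)))
    (LinearMap.id - (coneV K v k).comp (Dmap K n k)) (fun G => v ∉ G)
    (fun F hF => by simpa using KI_single v k F hF) z hz
  simpa using this

/-! ### bridge between `Chains K Γ k` and universal chains -/

noncomputable def toU (K : Type) [Field K] {n : ℕ} (Γ : Set (Finset (Fin n))) (k : ℕ) :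
    Chains K Γ k →ₗ[K] UC K n k :=
  Finsupp.lmapDomain K K
    (fun F : {F : Finset (Fin n) // F ∈ Γ ∧ F.card = k} =>
      (⟨F.1, F.2.2⟩ : {F : Finset (Fin n) // F.card = k}))

lemma toU_f_inj {Γ : Set (Finset (Fin n))} {k : ℕ} :
    Function.Injective (fun F : {F : Finset (Fin n) // F ∈ Γ ∧ F.card = k} =>
      (⟨F.1, F.2.2⟩ : {F : Finset (Fin n) // F.card = k})) := by
  intro a b h
  apply Subtype.ext
  have h' := congrArg (fun x : {F : Finset (Fin n) // F.card = k} => x.1) h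
  simpa using h' 

lemma toU_single {Γ : Set (Finset (Fin n))} {k : ℕ}
    (F : {F : Finset (Fin n) // F ∈ Γ ∧ F.card = k}) (a : K) :
    toU K Γ k (Finsupp.single F a) = Finsupp.single ⟨F.1, F.2.2⟩ a := by
  unfold toU
  rw [Finsupp.lmapDomain_apply, Finsupp.mapDomain_single]

lemma toU_inj {Γ : Set (Finset (Fin n))} {k : ℕ} :
    Function.Injective (toU K Γ k) := by
  unfold toU
  intro a b h
  rw [Finsupp.lmapDomain_apply, Finsupp.lmapDomain_apply] at h
  exact Finsupp.mapDomain_injective toU_f_inj h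

lemma toU_spt {Γ : Set (Finset (Fin n))} {k : ℕ} (x : Chains K Γ k) :
    spt Γ (toU K Γ k x) := by
  intro G h
  have hG : G ∈ (toU K Γ k x).support := Finsupp.mem_support_iff.mpr h
  unfold toU at hG
  rw [Finsupp.lmapDomain_apply] at hG
  have := Finsupp.mapDomain_support hG
  rw [Finset.mem_image] at this
  obtain ⟨F, _, hF⟩ := this
  rw [← hF]
  exact F.2.1

lemma toU_surj {Γ : Set (Finset (Fin n))} {k : ℕ} (z : UC K n k) (hz : spt Γ z) :
    ∃ x : Chains K Γ k, toU K Γ k x = z := by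
  classical
  refine ⟨Finsupp.comapDomain _ z (toU_f_inj.injOn), ?_⟩
  unfold toU
  rw [Finsupp.lmapDomain_apply]
  refine Finsupp.mapDomain_comapDomain _ toU_f_inj z ?_
  intro G hG
  have hG' := Finsupp.mem_support_iff.mp (Finset.mem_coe.mp hG)
  have hmem : (G : {F : Finset (Fin n) // F.card = k}).1 ∈ Γ := hz _ hG' 
  exact ⟨⟨G.1, hmem, G.2⟩, rfl⟩

lemma toU_boundaryElt {Γ : Set (Finset (Fin n))} {k : ℕ} (hC : IsComplex Γ)
    (F : {F : Finset (Fin n) // F ∈ Γ ∧ F.card = k + 1}) :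
    toU K Γ k (boundaryElt K Γ k F) = ∑ v ∈ F.1, sgn K F.1 v • sgl k (F.1.erase v) := by
  unfold boundaryElt
  rw [map_sum, ← Finset.sum_attach F.1 (fun v => sgn K F.1 v • sgl k (F.1.erase v))]
  refine Finset.sum_congr rfl fun v _ => ?_
  have hmem : F.1.erase v.1 ∈ Γ := hC.2 F.1 F.2.1 _ (Finset.erase_subset _ _)
  rw [dif_pos hmem, map_smul, toU_single,
    sgl_card k _ (by simp [Finset.card_erase_of_mem v.2, F.2.2])]
  rfl

lemma toU_comm {Γ : Set (Finset (Fin n))} {k : ℕ} (hC : IsComplex Γ)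
    (x : Chains K Γ (k+1)) :
    toU K Γ k (boundaryMap K Γ k x) = Dmap K n k (toU K Γ (k+1) x) := by
  have h : (toU K Γ k).comp (boundaryMap K Γ k) = (Dmap K n k).comp (toU K Γ (k+1)) := by
    refine Finsupp.lhom_ext fun F a => ?_
    simp only [LinearMap.comp_apply]
    have h1 : boundaryMap K Γ k (Finsupp.single F a) = a • boundaryElt K Γ k F := by
      unfold boundaryMap
      rw [Finsupp.lsum_single, LinearMap.toSpanSingleton_apply]
    rw [h1, map_smul, toU_boundaryElt hC, toU_single, ← Dmap_single (F := ⟨F.1, F.2.2⟩)]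
    rw [← map_smul, Finsupp.smul_single, smul_eq_mul, mul_one]
  exact LinearMap.congr_fun h x

lemma RHZ_nat (Γ : Set (Finset (Fin n))) (j : ℕ) :
    ReducedHomologyZero K Γ (j : ℤ) ↔
      LinearMap.ker (boundaryMap K Γ j) ≤ LinearMap.range (boundaryMap K Γ (j+1)) := by
  unfold ReducedHomologyZero
  rw [if_neg (by omega), if_neg (by omega)]
  exact Iff.rfl

lemma vanish_of_RHZ {Γ : Set (Finset (Fin n))} (hC : IsComplex Γ) (j : ℕ)
    (h : ReducedHomologyZero K Γ (j:ℤ)) (z : UC K n (j+1))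
    (hz : Dmap K n j z = 0) (hspt : spt Γ z) :
    ∃ w : UC K n (j+2), spt Γ w ∧ Dmap K n (j+1) w = z := by
  rw [RHZ_nat] at h
  obtain ⟨x, hx⟩ := toU_surj z hspt
  have hker : boundaryMap K Γ j x = 0 :=
    toU_inj (by rw [toU_comm hC, hx, hz, map_zero])
  obtain ⟨y, hy⟩ := h (LinearMap.mem_ker.mpr hker)
  exact ⟨toU K Γ (j+2) y, toU_spt _, by rw [← toU_comm hC, hy, hx]⟩

/-! ### combinatorial lemmas -/

lemma link_empty (Γ : Set (Finset (Fin n))) : link Γ ∅ = Γ := by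
  ext G; simp [link]

lemma isComplex_link {Γ : Set (Finset (Fin n))} (hC : IsComplex Γ) {v : Fin n}
    (hv : {v} ∈ Γ) : IsComplex (link Γ {v}) := by
  constructor
  · exact ⟨Finset.disjoint_empty_right _, by simpa using hv⟩
  · intro F hF G hG
    exact ⟨Finset.disjoint_of_subset_right hG hF.1,
      hC.2 _ hF.2 _ (Finset.union_subset_union_right hG)⟩

lemma link_link {Γ : Set (Finset (Fin n))} {v : Fin n} {F : Finset (Fin n)}
    (hd : Disjoint {v} F) :
    link (link Γ {v}) F = link Γ ({v} ∪ F) := by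
  ext G
  simp only [link, Set.mem_setOf_eq, Finset.disjoint_union_left,
    Finset.disjoint_union_right, Finset.union_assoc]
  tauto

lemma isPure_link {Γ : Set (Finset (Fin n))} {e : ℕ} (hP : IsPure Γ e) {v : Fin n}
    (hv : {v} ∈ Γ) : IsPure (link Γ {v}) (e-1) := by
  obtain ⟨-, hpure⟩ := hP
  have mk : ∀ F : Finset (Fin n), Disjoint {v} F → ({v} ∪ F) ∈ Γ →
      ∃ G ∈ link Γ {v}, F ⊆ G ∧ G.card = e - 1 := by
    intro F hdisj hmem
    obtain ⟨G, hG, hsub, hcard⟩ := hpure ({v} ∪ F) hmem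
    have hvG : v ∈ G := hsub (by simp)
    have hFG : F ⊆ G.erase v := by
      intro x hx
      refine Finset.mem_erase.mpr ⟨?_, hsub (by simp [hx])⟩
      intro hxv
      exact (Finset.disjoint_singleton_left.mp hdisj) (hxv ▸ hx)
    refine ⟨G.erase v, ⟨Finset.disjoint_singleton_left.mpr (Finset.notMem_erase v G), ?_⟩,
      hFG, by rw [Finset.card_erase_of_mem hvG, hcard]⟩
    have hun : {v} ∪ G.erase v = G := by
      ext x
      simp only [Finset.mem_union, Finset.mem_singleton, Finset.mem_erase]
      constructor
      · rintro (rfl | ⟨-, h⟩) <;> [exact hvG; exact h]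
      · intro hx
        by_cases hxv : x = v
        · exact Or.inl hxv
        · exact Or.inr ⟨hxv, hx⟩
    rw [hun]
    exact hG
  constructor
  · obtain ⟨G, hG, -, hcard⟩ := mk ∅ (Finset.disjoint_empty_right _) (by simpa using hv)
    exact ⟨G, hG, hcard⟩
  · intro F hF
    exact mk F hF.1 hF.2

lemma isCM_link {Γ : Set (Finset (Fin n))} (hCM : IsCMComplex K Γ) {v : Fin n}
    (hv : {v} ∈ Γ) : IsCMComplex K (link Γ {v}) := by
  refine ⟨isComplex_link hCM.1 hv, ?_⟩
  intro F hF i hi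
  rw [link_link hF.1] at hi ⊢
  exact hCM.2 ({v} ∪ F) hF.2 i hi

lemma dimC_pure {Γ : Set (Finset (Fin n))} {e : ℕ} (hP : IsPure Γ e) :
    dimC Γ = (e:ℤ) - 1 := by
  obtain ⟨⟨F0, hF0, hcard⟩, hpure⟩ := hP
  have hub : ∀ x ∈ (fun F : Finset (Fin n) => (F.card : ℤ) - 1) '' Γ, x ≤ (e:ℤ) - 1 := by
    rintro x ⟨F, hF, rfl⟩
    obtain ⟨G, _, hsub, hcard'⟩ := hpure F hF
    have := Finset.card_le_card hsub
    simp only []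
    omega
  apply le_antisymm
  · exact csSup_le ⟨_, ⟨F0, hF0, rfl⟩⟩ hub
  · apply le_csSup ⟨(e:ℤ) - 1, hub⟩
    exact ⟨F0, hF0, by simp [hcard]⟩

lemma singleton_union_erase {v : Fin n} {F : Finset (Fin n)} (hv : v ∈ F) :
    {v} ∪ F.erase v = F := by
  ext x
  simp only [Finset.mem_union, Finset.mem_singleton, Finset.mem_erase]
  constructor
  · rintro (rfl | ⟨-, h⟩) <;> [exact hv; exact h]
  · intro hx
    by_cases hxv : x = v
    · exact Or.inl hxv
    · exact Or.inr ⟨hxv, hx⟩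

lemma spt_Dmap {Γ' : Set (Finset (Fin n))} {k : ℕ}
    (h : ∀ F ∈ Γ', ∀ w : Fin n, F.erase w ∈ Γ') {z : UC K n (k+1)} (hz : spt Γ' z) :
    spt Γ' (Dmap K n k z) := by
  refine spt_map _ (fun F hF => ?_) hz
  rw [Dmap_single]
  exact spt_sum fun w _ => spt_smul _ (spt_sgl (h F.1 hF w))

/-- Reisner vanishing for induced subcomplexes of Cohen-Macaulay complexes
(a chain-level Hochster-type vanishing window). -/
lemma lemH : ∀ (s : ℕ) (Γ : Set (Finset (Fin n))) (e : ℕ),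
    IsComplex Γ → IsPure Γ e → IsCMComplex K Γ →
    ∀ S : Finset (Fin n), S.card = s → ∀ j : ℕ, (j:ℤ) ≤ (e:ℤ) - 2 - s →
    ∀ z : UC K n (j+1), Dmap K n j z = 0 →
    spt {F | F ∈ Γ ∧ Disjoint F S} z →
    ∃ w : UC K n (j+2), spt {F | F ∈ Γ ∧ Disjoint F S} w ∧ Dmap K n (j+1) w = z := by
  intro s
  induction s with
  | zero =>
    intro Γ e hC hP hCM S hS j hj z hz hspt
    have hSempty : S = ∅ := Finset.card_eq_zero.mp hS
    subst hSempty
    have hdim : (j:ℤ) < dimC (link Γ ∅) := by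
      rw [link_empty, dimC_pure hP]; omega
    have hRHZ := hCM.2 ∅ hC.1 (j:ℤ) hdim
    rw [link_empty] at hRHZ
    obtain ⟨w, hw1, hw2⟩ := vanish_of_RHZ hC j hRHZ z hz
      (spt_mono (fun F hF => hF.1) hspt)
    exact ⟨w, fun F h => ⟨hw1 F h, Finset.disjoint_empty_right _⟩, hw2⟩
  | succ s IH =>
    intro Γ e hC hP hCM S hS j hj z hz hspt
    classical
    obtain ⟨v, hv⟩ := Finset.card_pos.mp (by omega : 0 < S.card)
    set S' := S.erase v with hS'def
    have hcard' : S'.card = s := by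
      rw [hS'def, Finset.card_erase_of_mem hv, hS]
      omega
    have hSins : S = insert v S' := (Finset.insert_erase hv).symm
    have hsub' : ∀ F : Finset (Fin n), Disjoint F S → Disjoint F S' :=
      fun F h => h.mono_right (Finset.erase_subset _ _)
    have hspt' : spt {F | F ∈ Γ ∧ Disjoint F S'} z :=
      spt_mono (fun F hF => ⟨hF.1, hsub' _ hF.2⟩) hspt
    obtain ⟨η, hη, hηD⟩ := IH Γ e hC hP hCM S' hcard' j (by omega) z hz hspt'
    by_cases hvΓ : ({v} : Finset (Fin n)) ∈ Γ
    · -- the interesting case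
      set ηv := η.filter (fun F : {F : Finset (Fin n) // F.card = j+2} => v ∈ F.1) with hηv
      set η0 := η.filter (fun F : {F : Finset (Fin n) // F.card = j+2} => v ∉ F.1) with hη0
      have hsplit : ηv + η0 = η := Finsupp.filter_pos_add_filter_neg η _
      have hηv_mem : spt {G | v ∈ G} ηv := spt_filter_prop _ η
      have hη0_free : spt {G | v ∉ G} η0 := spt_filter_prop _ η
      have hηvΓ : spt {F | F ∈ Γ ∧ Disjoint F S'} ηv := spt_filter _ hη
      have hη0Γ : spt {F | F ∈ Γ ∧ Disjoint F S'} η0 := spt_filter _ hη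
      set b := unconeV K v (j+1) ηv with hb
      have hcb : coneV K v (j+1) b = ηv := CU_ext v hηv_mem
      have hbfree : spt {G | v ∉ G} b :=
        spt_unconeV v (fun F _ _ => Finset.notMem_erase v F) hηvΓ
      have hblink : spt {F | F ∈ link Γ {v} ∧ Disjoint F S'} b := by
        refine spt_unconeV (Γ := {F | (F ∈ Γ ∧ Disjoint F S') ∧ v ∈ F}) v
          (fun F hF hvF => ?_) (fun F h => ⟨hηvΓ F h, hηv_mem F h⟩)
        obtain ⟨⟨hFΓ, hFS'⟩, hvF'⟩ := hF
        refine ⟨⟨Finset.disjoint_singleton_left.mpr (Finset.notMem_erase v F), ?_⟩,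
          hFS'.mono_left (Finset.erase_subset _ _)⟩
        rw [singleton_union_erase hvF']
        exact hFΓ
      have herase_free : ∀ F ∈ {G : Finset (Fin n) | v ∉ G}, ∀ w : Fin n,
          F.erase w ∈ {G : Finset (Fin n) | v ∉ G} :=
        fun F hF w hc => hF (Finset.mem_of_mem_erase hc)
      have hKI : Dmap K n (j+1) ηv = b - coneV K v j (Dmap K n j b) := by
        rw [← hcb]; exact KI_ext v hbfree
      have heq : z = b - coneV K v j (Dmap K n j b) + Dmap K n (j+1) η0 := by
        rw [← hηD]
        conv_lhs => rw [← hsplit]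
        rw [map_add, hKI]
      have hzfree : spt {G | v ∉ G} z :=
        fun F h => Finset.disjoint_right.mp (hspt F h).2 hv
      have hDη0free : spt {G | v ∉ G} (Dmap K n (j+1) η0) := spt_Dmap herase_free hη0_free
      have hvpart : coneV K v j (Dmap K n j b) = 0 := by
        have h1 : z - b - Dmap K n (j+1) η0 = -(coneV K v j (Dmap K n j b)) := by
          rw [heq]; abel
        have h2 := spt_eq_zero (spt_sub (spt_sub hzfree hbfree) hDη0free)
          (by rw [h1]; exact spt_neg (spt_coneV_mem v _)) (fun F hF => hF)
        rw [h2] at h1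
        exact neg_eq_zero.mp h1.symm
      have hDb : Dmap K n j b = 0 := by
        have h3 := congrArg (unconeV K v j) hvpart
        rw [UC_ext v (spt_Dmap herase_free hbfree), map_zero] at h3
        exact h3
      have hzb : z = b + Dmap K n (j+1) η0 := by rw [heq, hvpart, sub_zero]
      have he1 : 1 ≤ e := by
        obtain ⟨G, hG, hsubG, hcardG⟩ := hP.2 {v} hvΓ
        have h4 := Finset.card_le_card hsubG
        rw [Finset.card_singleton] at h4
        omega
      obtain ⟨c, hcspt, hcD⟩ := IH (link Γ {v}) (e-1) (isComplex_link hC hvΓ)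
        (isPure_link hP hvΓ) (isCM_link hCM hvΓ) S' hcard' j (by omega) b hDb hblink
      refine ⟨c + η0, ?_, ?_⟩
      · refine spt_add (fun F h => ?_) (fun F h => ?_)
        · obtain ⟨⟨hdv, hmem⟩, hdS'⟩ := hcspt F h
          have hvnF : v ∉ F.1 := Finset.disjoint_singleton_left.mp hdv
          refine ⟨hC.2 _ hmem _ Finset.subset_union_right, ?_⟩
          rw [hSins]
          exact Finset.disjoint_insert_right.mpr ⟨hvnF, hdS'⟩
        · obtain ⟨hmem, hdS'⟩ := hη0Γ F h
          refine ⟨hmem, ?_⟩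
          rw [hSins]
          exact Finset.disjoint_insert_right.mpr ⟨hη0_free F h, hdS'⟩
      · rw [map_add, hcD]
        exact hzb.symm
    · refine ⟨η, fun F h => ?_, hηD⟩
      obtain ⟨hmem, hdS'⟩ := hη F h
      have hvnF : v ∉ F.1 :=
        fun hc => hvΓ (hC.2 F.1 hmem {v} (Finset.singleton_subset_iff.mpr hc))
      rw [hSins]
      exact ⟨hmem, Finset.disjoint_insert_right.mpr ⟨hvnF, hdS'⟩⟩
/-- Main deletion loop: pushing a non-bounding cycle off a set of vertices. -/
lemma loop {Δ : Set (Finset (Fin n))} {d : ℕ} (hC : IsComplex Δ) (hP : IsPure Δ d)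
    (hvert : ∀ v : Fin n, ({v} : Finset (Fin n)) ∈ Δ)
    (hCM : ∀ v : Fin n, IsCMComplex K (link Δ {v}))
    (j : ℕ) (z0 : UC K n (j+2)) (hz0 : Dmap K n (j+1) z0 = 0) (hspt0 : spt Δ z0)
    (hnb : ¬ ∃ w : UC K n (j+3), spt Δ w ∧ Dmap K n (j+2) w = z0) :
    ∀ S : Finset (Fin n), (S.card : ℤ) ≤ (d:ℤ) - (j+2) →
    ∃ z : UC K n (j+2), Dmap K n (j+1) z = 0 ∧ spt {F | F ∈ Δ ∧ Disjoint F S} z ∧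
      ¬ ∃ w : UC K n (j+3), spt Δ w ∧ Dmap K n (j+2) w = z := by
  intro S
  induction S using Finset.induction_on with
  | empty =>
    intro _
    exact ⟨z0, hz0, fun F h => ⟨hspt0 F h, Finset.disjoint_empty_right _⟩, hnb⟩
  | insert v S' hvS' ih =>
    intro hcard
    have hd1 : 1 ≤ d := by
      obtain ⟨G, _, hsubG, hcardG⟩ := hP.2 {v} (hvert v)
      have h4 := Finset.card_le_card hsubG
      rw [Finset.card_singleton] at h4
      omega
    have hcardS' : (S'.card : ℤ) ≤ (d:ℤ) - (j+2) - 1 := by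
      rw [Finset.card_insert_of_notMem hvS'] at hcard
      push_cast at hcard
      omega
    obtain ⟨z, hzD, hzspt, hznb⟩ := ih (by omega)
    classical
    set zv := z.filter (fun F : {F : Finset (Fin n) // F.card = j+2} => v ∈ F.1) with hzv
    set zz0 := z.filter (fun F : {F : Finset (Fin n) // F.card = j+2} => v ∉ F.1) with hzz0
    have hsplit : zv + zz0 = z := Finsupp.filter_pos_add_filter_neg z _
    have hzv_mem : spt {G | v ∈ G} zv := spt_filter_prop _ z
    have hz0_free : spt {G | v ∉ G} zz0 := spt_filter_prop _ z
    have hzvΓ : spt {F | F ∈ Δ ∧ Disjoint F S'} zv := spt_filter _ hzspt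
    have hz0Γ : spt {F | F ∈ Δ ∧ Disjoint F S'} zz0 := spt_filter _ hzspt
    set c := unconeV K v (j+1) zv with hc
    have hcc : coneV K v (j+1) c = zv := CU_ext v hzv_mem
    have hcfree : spt {G | v ∉ G} c :=
      spt_unconeV v (fun F _ _ => Finset.notMem_erase v F) hzvΓ
    have hclink : spt {F | F ∈ link Δ {v} ∧ Disjoint F S'} c := by
      refine spt_unconeV (Γ := {F | (F ∈ Δ ∧ Disjoint F S') ∧ v ∈ F}) v
        (fun F hF hvF => ?_) (fun F h => ⟨hzvΓ F h, hzv_mem F h⟩)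
      obtain ⟨⟨hFΓ, hFS'⟩, hvF'⟩ := hF
      refine ⟨⟨Finset.disjoint_singleton_left.mpr (Finset.notMem_erase v F), ?_⟩,
        hFS'.mono_left (Finset.erase_subset _ _)⟩
      rw [singleton_union_erase hvF']
      exact hFΓ
    have herase_free : ∀ F ∈ {G : Finset (Fin n) | v ∉ G}, ∀ w : Fin n,
        F.erase w ∈ {G : Finset (Fin n) | v ∉ G} :=
      fun F hF w hcon => hF (Finset.mem_of_mem_erase hcon)
    have hKI : Dmap K n (j+1) zv = c - coneV K v j (Dmap K n j c) := by
      rw [← hcc]; exact KI_ext v hcfree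
    have heq : (0 : UC K n (j+1)) = c - coneV K v j (Dmap K n j c) + Dmap K n (j+1) zz0 := by
      rw [← hzD]
      conv_lhs => rw [← hsplit]
      rw [map_add, hKI]
    have hDzz0free : spt {G | v ∉ G} (Dmap K n (j+1) zz0) := spt_Dmap herase_free hz0_free
    have h1 : c + Dmap K n (j+1) zz0 = coneV K v j (Dmap K n j c) := by
      have h0 := heq.symm
      rw [sub_add_eq_add_sub, sub_eq_zero] at h0
      exact h0
    have h2 : c + Dmap K n (j+1) zz0 = 0 :=
      spt_eq_zero (spt_add hcfree hDzz0free)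
        (by rw [h1]; exact spt_coneV_mem v _) (fun F hF => hF)
    have hDc : Dmap K n j c = 0 := by
      have h3 := congrArg (unconeV K v j) (h1 ▸ h2 : coneV K v j (Dmap K n j c) = 0)
      rw [UC_ext v (spt_Dmap herase_free hcfree), map_zero] at h3
      exact h3
    have hDzz0 : Dmap K n (j+1) zz0 = -c := by
      exact eq_neg_of_add_eq_zero_right h2
    obtain ⟨b, hbspt, hbD⟩ := lemH S'.card (link Δ {v}) (d-1) (isComplex_link hC (hvert v))
      (isPure_link hP (hvert v)) (hCM v) S' rfl j (by omega) c hDc hclink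
    have hbfree : spt {G | v ∉ G} b :=
      fun F h => Finset.disjoint_singleton_left.mp (hbspt F h).1.1
    have hbΔ : spt {F | F ∈ Δ ∧ Disjoint F (insert v S')} b := by
      intro F h
      obtain ⟨⟨hdv, hmem⟩, hdS'⟩ := hbspt F h
      exact ⟨hC.2 _ hmem _ Finset.subset_union_right,
        Finset.disjoint_insert_right.mpr ⟨Finset.disjoint_singleton_left.mp hdv, hdS'⟩⟩
    have hzz0Δ : spt {F | F ∈ Δ ∧ Disjoint F (insert v S')} zz0 := by
      intro F h
      exact ⟨(hz0Γ F h).1,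
        Finset.disjoint_insert_right.mpr ⟨hz0_free F h, (hz0Γ F h).2⟩⟩
    refine ⟨zz0 + b, ?_, spt_add hzz0Δ hbΔ, ?_⟩
    · rw [map_add, hbD, hDzz0, neg_add_cancel]
    · rintro ⟨w, hwspt, hwD⟩
      apply hznb
      have hconeb : Dmap K n (j+2) (coneV K v (j+2) b) = b - zv := by
        rw [KI_ext v hbfree, hbD, hcc]
      have hconebΔ : spt Δ (coneV K v (j+2) b) := by
        refine spt_coneV (Γ := {F | F ∈ link Δ {v} ∧ Disjoint F S'}) v
          (fun G hG hvG => ?_) hbspt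
        have hins : insert v G = {v} ∪ G := by ext x; simp
        rw [hins]
        exact hG.1.2
      refine ⟨w - coneV K v (j+2) b, spt_sub hwspt hconebΔ, ?_⟩
      rw [map_sub, hwD, hconeb]
      have : zz0 + b - (b - zv) = zv + zz0 := by abel
      rw [this, hsplit]

end BHVB

/-- If `Δ` is a `(d-1)`-dimensional Buchsbaum complex on `n` vertices with
`H̃ᵢ(Δ; K) ≠ 0` for some `i ≥ 1`, then `n ≥ 2d - i`. -/
theorem buchsbaum_homology_vertex_bound (K : Type) [Field K] {n d : ℕ}
    (Δ : Set (Finset (Fin n))) (hvert : ∀ v : Fin n, ({v} : Finset (Fin n)) ∈ Δ)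
    (hB : IsCMt K Δ d 1) (i : ℕ) (hi : 1 ≤ i)
    (hH : ¬ ReducedHomologyZero K Δ (i : ℤ)) :
    2 * (d : ℤ) - i ≤ n := by
  classical
  obtain ⟨hC, hP, hCMt⟩ := hB
  by_contra hcon
  push_neg at hcon
  obtain ⟨j, rfl⟩ : ∃ j, i = j + 1 := ⟨i - 1, by omega⟩
  rw [BHVB.RHZ_nat Δ (j+1)] at hH
  obtain ⟨x, hxker, hxnr⟩ : ∃ x, x ∈ LinearMap.ker (boundaryMap K Δ (j+1)) ∧
      x ∉ LinearMap.range (boundaryMap K Δ (j+1+1)) := by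
    by_contra hno
    push_neg at hno
    exact hH (fun x hx => hno x hx)
  set z0 := BHVB.toU K Δ (j+2) x with hz0def
  have hz0D : BHVB.Dmap K n (j+1) z0 = 0 := by
    rw [hz0def, ← BHVB.toU_comm hC x, LinearMap.mem_ker.mp hxker, map_zero]
  have hnb : ¬ ∃ w : BHVB.UC K n (j+3), BHVB.spt Δ w ∧ BHVB.Dmap K n (j+2) w = z0 := by
    rintro ⟨w, hwspt, hwD⟩
    obtain ⟨y, hy⟩ := BHVB.toU_surj w hwspt
    refine hxnr ⟨y, ?_⟩
    apply BHVB.toU_inj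
    rw [BHVB.toU_comm hC y, hy, hwD]
  obtain ⟨G, hG, hGcard⟩ := hP.1
  have hdn : d ≤ n := by
    have h5 := Finset.card_le_card (Finset.subset_univ G)
    rwa [Finset.card_univ, Fintype.card_fin, hGcard] at h5
  have hScard : (Gᶜ : Finset (Fin n)).card = n - d := by
    rw [Finset.card_compl, hGcard, Fintype.card_fin]
  have hbudget : (((Gᶜ : Finset (Fin n)).card : ℕ) : ℤ) ≤ (d:ℤ) - (j+2) := by
    rw [hScard]
    push_cast at hcon ⊢
    omega
  obtain ⟨z, hzD, hzspt, hznb⟩ := BHVB.loop hC hP hvert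
    (fun v => hCMt {v} (hvert v) (by simp)) j z0 hz0D (BHVB.toU_spt x) hnb Gᶜ hbudget
  have husome : 0 < G.card := by
    push_cast at hcon
    omega
  obtain ⟨u, hu⟩ := Finset.card_pos.mp husome
  have hzG : BHVB.spt {F | F ⊆ G} z := by
    intro F h
    have hdisj := (hzspt F h).2
    intro y hy
    by_contra hyG
    exact Finset.disjoint_left.mp hdisj hy (Finset.mem_compl.mpr hyG)
  set zu := z.filter (fun F : {F : Finset (Fin n) // F.card = j+2} => u ∈ F.1) with hzu
  set zr := z.filter (fun F : {F : Finset (Fin n) // F.card = j+2} => u ∉ F.1) with hzr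
  have hsplit : zu + zr = z := Finsupp.filter_pos_add_filter_neg z _
  have hzu_mem : BHVB.spt {H | u ∈ H} zu := BHVB.spt_filter_prop _ z
  have hzr_free : BHVB.spt {H | u ∉ H} zr := BHVB.spt_filter_prop _ z
  have hDsum : BHVB.Dmap K n (j+1) zu + BHVB.Dmap K n (j+1) zr = 0 := by
    rw [← map_add, hsplit, hzD]
  have hDzr : BHVB.Dmap K n (j+1) zr = -(BHVB.Dmap K n (j+1) zu) :=
    eq_neg_of_add_eq_zero_right hDsum
  have hKIr : BHVB.Dmap K n (j+2) (BHVB.coneV K u (j+2) zr) =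
      zr - BHVB.coneV K u (j+1) (BHVB.Dmap K n (j+1) zr) := BHVB.KI_ext u hzr_free
  have hKI2 : BHVB.coneV K u (j+1) (BHVB.Dmap K n (j+1) zu) = zu := BHVB.KI2_ext u hzu_mem
  apply hznb
  refine ⟨BHVB.coneV K u (j+2) zr, ?_, ?_⟩
  · refine BHVB.spt_coneV (Γ := {F | F ⊆ G}) u (fun H hHsub huH => ?_)
      (BHVB.spt_filter _ hzG)
    exact hC.2 G hG _ (Finset.insert_subset hu hHsub)
  · rw [hKIr, hDzr, map_neg, hKI2, sub_neg_eq_add]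
    rw [← hsplit]
    exact add_comm zr zu
end
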